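/- arXiv:1506.07125 — 3 statements merged into one kernel-verified Lean document; each statement's English description precedes it below -/
import Mathlib

section
/- (Martingale Carleson Embedding Theorem, dyadic case) Let μ be a locally finite Borel measure on ℝ^n, let 𝒟 be the standard dyadic lattice, and let (w_Q)_{Q ∈ 𝒟} be nonnegative reals satisfying ∑_{Q ⊆ R, Q ∈ 𝒟} w_Q ≤ A·μ(R) for every R ∈ 𝒟. Then for every measurable f ≥ 0 and every p ∈ (1, ∞), ∑_{Q ∈ 𝒟} (⨍_Q f dμ)^p · w_Q ≤ (p')^p · A · ‖f‖_{L^p(μ)}^p, where p' = p/(p-1). -/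
open MeasureTheory ENNReal Set

/-- The dyadic cube of generation `k` at position `m` in `ℝⁿ`. -/
def dyadicCube (n : ℕ) (k : ℤ) (m : Fin n → ℤ) : Set (Fin n → ℝ) :=
  {x | ∀ i, (m i : ℝ) * (2 : ℝ) ^ (-k) ≤ x i ∧ x i < ((m i : ℝ) + 1) * (2 : ℝ) ^ (-k)}

/-- The average `⨍_Q f dμ`, interpreted as `0` when `μ Q = 0` or `μ Q = ∞`. -/
noncomputable def dyAvg {X : Type*} [MeasurableSpace X] (μ : Measure X)
    (f : X → ℝ≥0∞) (Q : Set X) : ℝ≥0∞ :=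
  if μ Q = 0 then 0 else (∫⁻ x in Q, f x ∂μ) / μ Q

namespace CarlAux


abbrev cube (n : ℕ) (i : ℤ × (Fin n → ℤ)) : Set (Fin n → ℝ) := dyadicCube n i.1 i.2

lemma cube_measurable {n : ℕ} (i : ℤ × (Fin n → ℤ)) : MeasurableSet (cube n i) := by
  have : cube n i = ⋂ j, (fun x : Fin n → ℝ => x j) ⁻¹'
      (Set.Ico ((i.2 j : ℝ) * (2:ℝ) ^ (-i.1)) (((i.2 j : ℝ) + 1) * (2:ℝ) ^ (-i.1))) := by
    ext x; simp [cube, dyadicCube, Set.mem_iInter, Set.mem_Ico]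
  rw [this]
  exact MeasurableSet.iInter fun j => (measurable_pi_apply j) measurableSet_Ico

lemma cube_subset_Icc {n : ℕ} (i : ℤ × (Fin n → ℤ)) :
    cube n i ⊆ Set.Icc (fun j => (i.2 j : ℝ) * (2:ℝ) ^ (-i.1))
      (fun j => ((i.2 j : ℝ) + 1) * (2:ℝ) ^ (-i.1)) := by
  intro x hx
  constructor <;> intro j
  · exact (hx j).1
  · exact (hx j).2.le

lemma cube_measure_lt_top {n : ℕ} (μ : Measure (Fin n → ℝ)) [IsLocallyFiniteMeasure μ]
    (i : ℤ × (Fin n → ℤ)) : μ (cube n i) < ⊤ :=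
  lt_of_le_of_lt (measure_mono (cube_subset_Icc i)) isCompact_Icc.measure_lt_top

/-- one step to the parent cube -/
def stepI {n : ℕ} (i : ℤ × (Fin n → ℤ)) : ℤ × (Fin n → ℤ) := (i.1 - 1, fun j => (i.2 j) / 2)

lemma cube_subset_step {n : ℕ} (i : ℤ × (Fin n → ℤ)) : cube n i ⊆ cube n (stepI i) := by
  obtain ⟨k, m⟩ := i
  intro x hx j
  obtain ⟨h1, h2⟩ := hx j
  have hpow : (2:ℝ) ^ (-(k - 1)) = 2 * (2:ℝ) ^ (-k) := by
    rw [neg_sub, sub_eq_add_neg]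
    rw [zpow_add₀ (by norm_num : (2:ℝ) ≠ 0)]
    norm_num
  have hq : (2:ℤ) * (m j / 2) ≤ m j ∧ m j ≤ 2 * (m j / 2) + 1 := by
    constructor
    · have := Int.mul_ediv_add_emod (m j) 2
      have h := Int.emod_nonneg (m j) (by norm_num : (2:ℤ) ≠ 0)
      omega
    · have := Int.mul_ediv_add_emod (m j) 2
      have h := Int.emod_lt_of_pos (m j) (by norm_num : (0:ℤ) < 2)
      omega
  have hpos : (0:ℝ) < (2:ℝ) ^ (-k) := by positivity
  constructor
  · show ((m j / 2 : ℤ) : ℝ) * (2:ℝ) ^ (-(k - 1)) ≤ x j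
    rw [hpow]
    calc ((m j / 2 : ℤ) : ℝ) * (2 * (2:ℝ) ^ (-k)) = ((2 * (m j / 2) : ℤ) : ℝ) * (2:ℝ) ^ (-k) := by
          push_cast; ring
    _ ≤ (m j : ℝ) * (2:ℝ) ^ (-k) := by
          apply mul_le_mul_of_nonneg_right _ hpos.le
          exact_mod_cast hq.1
    _ ≤ x j := h1
  · show x j < (((m j / 2 : ℤ) : ℝ) + 1) * (2:ℝ) ^ (-(k - 1))
    rw [hpow]
    calc x j < ((m j : ℝ) + 1) * (2:ℝ) ^ (-k) := h2
    _ ≤ (((2 * (m j / 2) + 1 : ℤ) : ℝ) + 1) * (2:ℝ) ^ (-k) := by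
          apply mul_le_mul_of_nonneg_right _ hpos.le
          have : (m j : ℝ) ≤ ((2 * (m j / 2) + 1 : ℤ) : ℝ) := by exact_mod_cast hq.2
          linarith
    _ = (((m j / 2 : ℤ) : ℝ) + 1) * (2 * (2:ℝ) ^ (-k)) := by push_cast; ring

/-- `d`-fold ancestor -/
def anc {n : ℕ} : ℕ → (ℤ × (Fin n → ℤ)) → ℤ × (Fin n → ℤ)
  | 0, i => i
  | (d+1), i => stepI (anc d i)

lemma anc_fst {n : ℕ} (d : ℕ) (i : ℤ × (Fin n → ℤ)) : (anc d i).1 = i.1 - d := by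
  induction d with
  | zero => simp [anc]
  | succ d ih => simp [anc, stepI, ih]; ring

lemma cube_subset_anc {n : ℕ} (d : ℕ) (i : ℤ × (Fin n → ℤ)) : cube n i ⊆ cube n (anc d i) := by
  induction d with
  | zero => exact subset_rfl
  | succ d ih => exact ih.trans (cube_subset_step _)

lemma anc_anc {n : ℕ} (d e : ℕ) (i : ℤ × (Fin n → ℤ)) : anc d (anc e i) = anc (d + e) i := by
  induction d with
  | zero => simp [anc]
  | succ d ih => simp only [anc, ih]
                 have : d + 1 + e = (d + e) + 1 := by omega
                 rw [this]
                 rfl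

lemma snd_eq_of_mem {n : ℕ} {k : ℤ} {m m' : Fin n → ℤ} {x : Fin n → ℝ}
    (h : x ∈ dyadicCube n k m) (h' : x ∈ dyadicCube n k m') : m = m' := by
  funext j
  have hpos : (0:ℝ) < (2:ℝ) ^ (k : ℤ) := by positivity
  have key : ∀ (mm : Fin n → ℤ), x ∈ dyadicCube n k mm → mm j = ⌊x j * (2:ℝ) ^ (k:ℤ)⌋ := by
    intro mm hmm
    obtain ⟨l1, l2⟩ := hmm j
    have h2 : (2:ℝ) ^ (-k) = ((2:ℝ) ^ (k:ℤ))⁻¹ := by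
      rw [zpow_neg]
    symm
    rw [Int.floor_eq_iff]
    constructor
    · have := mul_le_mul_of_nonneg_right l1 hpos.le
      rwa [mul_assoc, h2, inv_mul_cancel₀ hpos.ne', mul_one] at this
    · have := mul_lt_mul_of_pos_right l2 hpos
      rwa [mul_assoc, h2, inv_mul_cancel₀ hpos.ne', mul_one] at this
  rw [key m h, key m' h']

lemma eq_anc_of_mem {n : ℕ} {i j : ℤ × (Fin n → ℤ)} {x : Fin n → ℝ} (d : ℕ)
    (hd : j.1 = i.1 - d) (hi : x ∈ cube n i) (hj : x ∈ cube n j) : j = anc d i := by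
  have h1 : (anc d i).1 = j.1 := by rw [anc_fst, hd]
  have hx : x ∈ cube n (anc d i) := cube_subset_anc d i hi
  have hx' : x ∈ dyadicCube n j.1 (anc d i).2 := by
    rw [← h1]; exact hx
  have h2 : j.2 = (anc d i).2 := snd_eq_of_mem hj hx'
  exact Prod.ext h1.symm h2


lemma anc_zero {n : ℕ} (i : ℤ × (Fin n → ℤ)) : anc 0 i = i := rfl


section Sel
variable {n : ℕ}

open Classical in
noncomputable def sel (a : ℤ × (Fin n → ℤ) → ℝ≥0∞) (τ : ℝ≥0∞) (K₀ : ℤ)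
    (i : ℤ × (Fin n → ℤ)) : ℤ × (Fin n → ℤ) :=
  anc (Nat.findGreatest (fun d => τ < a (anc d i)) ((i.1 - K₀).toNat)) i

variable {a : ℤ × (Fin n → ℤ) → ℝ≥0∞} {τ : ℝ≥0∞} {K₀ : ℤ} {i : ℤ × (Fin n → ℤ)}

open Classical in
lemma sel_avg (hK : K₀ ≤ i.1) (hτ : τ < a i) : τ < a (sel a τ K₀ i) := by
  rw [sel]
  exact Nat.findGreatest_spec (P := fun d => τ < a (anc d i)) (Nat.zero_le _)
    (by show τ < a (anc 0 i); rw [anc_zero]; exact hτ)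

open Classical in
lemma sel_fst (hK : K₀ ≤ i.1) : K₀ ≤ (sel a τ K₀ i).1 := by
  rw [sel, anc_fst]
  have h1 : Nat.findGreatest (fun d => τ < a (anc d i)) ((i.1 - K₀).toNat) ≤ (i.1 - K₀).toNat :=
    Nat.findGreatest_le _
  omega

lemma cube_subset_sel : cube n i ⊆ cube n (sel a τ K₀ i) := cube_subset_anc _ i

open Classical in
lemma sel_not_avg (hK : K₀ ≤ i.1) {e : ℕ} (he : e ≠ 0)
    (hKe : K₀ ≤ (anc e (sel a τ K₀ i)).1) : ¬ τ < a (anc e (sel a τ K₀ i)) := by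
  intro hP
  rw [sel, anc_anc] at hP hKe
  set D := Nat.findGreatest (fun d => τ < a (anc d i)) ((i.1 - K₀).toNat) with hD
  rw [anc_fst] at hKe
  have htn : ((i.1 - K₀).toNat : ℤ) = i.1 - K₀ := Int.toNat_of_nonneg (by omega)
  have hbound : e + D ≤ (i.1 - K₀).toNat := by omega
  exact Nat.findGreatest_is_greatest (P := fun d => τ < a (anc d i)) (by omega) hbound hP

lemma sel_maximal (hK : K₀ ≤ i.1) {j : ℤ × (Fin n → ℤ)} (hjK : K₀ ≤ j.1) (hja : τ < a j)
    {x : Fin n → ℝ} (hx1 : x ∈ cube n (sel a τ K₀ i)) (hx2 : x ∈ cube n j)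
    (hgen : j.1 ≤ (sel a τ K₀ i).1) : j = sel a τ K₀ i := by
  set s := sel a τ K₀ i with hs
  set e := ((s.1 - j.1).toNat) with hee
  have hez : (e : ℤ) = s.1 - j.1 := Int.toNat_of_nonneg (by omega)
  have hj : j = anc e s := eq_anc_of_mem e (by omega) hx1 hx2
  rcases Nat.eq_zero_or_pos e with h0 | hpos
  · rw [hj, h0, anc_zero]
  · exfalso
    have hKe : K₀ ≤ (anc e s).1 := by rw [← hj]; exact hjK
    have hP : τ < a (anc e s) := by rw [← hj]; exact hja
    exact sel_not_avg hK (by omega) hKe hP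

end Sel

section Stopping

variable {n : ℕ} (μ : Measure (Fin n → ℝ)) [IsLocallyFiniteMeasure μ]
  (f : (Fin n → ℝ) → ℝ≥0∞)

lemma avg_mul_bound {τ : ℝ≥0∞} (hτ0 : τ ≠ 0) (hτtop : τ ≠ ⊤) {Q : Set (Fin n → ℝ)}
    (hQtop : μ Q ≠ ⊤) (h : τ < dyAvg μ f Q) : μ Q ≤ τ⁻¹ * ∫⁻ x in Q, f x ∂μ := by
  rw [dyAvg] at h
  by_cases hQ0 : μ Q = 0
  · simp [hQ0] at h
  · rw [if_neg hQ0] at h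
    have h2 : τ * μ Q < ∫⁻ x in Q, f x ∂μ :=
      (ENNReal.lt_div_iff_mul_lt (Or.inl hQ0) (Or.inl hQtop)).mp h
    calc μ Q = τ⁻¹ * (τ * μ Q) := by
          rw [← mul_assoc, ENNReal.inv_mul_cancel hτ0 hτtop, one_mul]
    _ ≤ τ⁻¹ * ∫⁻ x in Q, f x ∂μ := mul_le_mul_right h2.le _

lemma avg_CZ {τ : ℝ≥0∞} (hτtop : τ ≠ ⊤) {Q : Set (Fin n → ℝ)}
    (hQtop : μ Q ≠ ⊤) (h : τ < dyAvg μ f Q) :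
    τ / 2 < dyAvg μ ({y | τ / 2 < f y}.indicator f) Q := by
  set g := ({y | τ / 2 < f y}.indicator f) with hg
  by_cases hQ0 : μ Q = 0
  · rw [dyAvg, if_pos hQ0] at h; simp at h
  have hpt : ∀ x, f x ≤ τ / 2 + g x := by
    intro x
    by_cases hc : τ / 2 < f x
    · have hgx : g x = f x := by
        simp only [hg, Set.indicator_apply, Set.mem_setOf_eq, if_pos hc]
      rw [hgx]; exact le_add_self
    · push_neg at hc
      exact hc.trans le_self_add
  have havg : dyAvg μ f Q ≤ τ / 2 + dyAvg μ g Q := by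
    rw [dyAvg, dyAvg, if_neg hQ0, if_neg hQ0]
    have h1 : (∫⁻ x in Q, f x ∂μ) ≤ ∫⁻ x in Q, (τ / 2 + g x) ∂μ := lintegral_mono hpt
    have h2 : (∫⁻ x in Q, (τ / 2 + g x) ∂μ) = τ / 2 * μ Q + ∫⁻ x in Q, g x ∂μ := by
      rw [lintegral_add_left measurable_const, setLIntegral_const]
    calc (∫⁻ x in Q, f x ∂μ) / μ Q ≤ (τ / 2 * μ Q + ∫⁻ x in Q, g x ∂μ) / μ Q := by
          rw [← h2]; exact ENNReal.div_le_div_right (h2 ▸ h1) _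
    _ = τ / 2 * μ Q / μ Q + (∫⁻ x in Q, g x ∂μ) / μ Q := ENNReal.add_div
    _ = τ / 2 + (∫⁻ x in Q, g x ∂μ) / μ Q := by
          rw [mul_div_assoc, ENNReal.div_self hQ0 hQtop, mul_one]
  by_contra hcon
  push_neg at hcon
  have : dyAvg μ f Q ≤ τ := by
    calc dyAvg μ f Q ≤ τ / 2 + dyAvg μ g Q := havg
    _ ≤ τ / 2 + τ / 2 := add_le_add_right hcon _
    _ = τ := ENNReal.add_halves τ
  exact absurd h (not_lt.mpr this)

lemma exists_stopping (τ : ℝ≥0∞) (K₀ : ℤ) :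
    ∃ M : Set (ℤ × (Fin n → ℤ)),
      (∀ j ∈ M, K₀ ≤ j.1 ∧ τ < dyAvg μ f (cube n j)) ∧
      M.PairwiseDisjoint (cube n) ∧
      (⋃ j ∈ M, cube n j) =
        (⋃ i ∈ {i : ℤ × (Fin n → ℤ) | K₀ ≤ i.1 ∧ τ < dyAvg μ f (cube n i)}, cube n i) ∧
      (∀ i : ℤ × (Fin n → ℤ), K₀ ≤ i.1 → τ < dyAvg μ f (cube n i) →
        ∃ j ∈ M, cube n i ⊆ cube n j) := by
  classical
  set a := fun i : ℤ × (Fin n → ℤ) => dyAvg μ f (cube n i) with ha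
  set S := {i : ℤ × (Fin n → ℤ) | K₀ ≤ i.1 ∧ τ < a i} with hS
  refine ⟨sel a τ K₀ '' S, ?_, ?_, ?_, ?_⟩
  · rintro j ⟨i, hi, rfl⟩
    exact ⟨sel_fst hi.1, sel_avg hi.1 hi.2⟩
  · rintro j ⟨i, hi, rfl⟩ j' ⟨i', hi', rfl⟩ hne
    rw [Function.onFun]
    by_contra hdis
    obtain ⟨x, hx, hx'⟩ := Set.not_disjoint_iff.mp hdis
    rcases le_total (sel a τ K₀ i).1 (sel a τ K₀ i').1 with hle | hle
    · exact hne (sel_maximal hi'.1 (sel_fst hi.1) (sel_avg hi.1 hi.2) hx' hx hle)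
    · exact hne (sel_maximal hi.1 (sel_fst hi'.1) (sel_avg hi'.1 hi'.2) hx hx' hle).symm
  · apply Set.Subset.antisymm
    · apply Set.iUnion₂_subset
      rintro j ⟨i, hi, rfl⟩
      exact Set.subset_biUnion_of_mem (u := fun i => cube n i) ⟨sel_fst hi.1, sel_avg hi.1 hi.2⟩
    · apply Set.iUnion₂_subset
      intro i hi
      exact cube_subset_sel.trans
        (Set.subset_biUnion_of_mem (u := fun i => cube n i) (Set.mem_image_of_mem _ hi))
  · intro i h1 h2
    exact ⟨sel a τ K₀ i, Set.mem_image_of_mem _ ⟨h1, h2⟩, cube_subset_sel⟩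

end Stopping


section Bounds
variable {n : ℕ} (μ : Measure (Fin n → ℝ)) [IsLocallyFiniteMeasure μ] (f : (Fin n → ℝ) → ℝ≥0∞)

noncomputable def maxFn (K₀ : ℤ) : (Fin n → ℝ) → ℝ≥0∞ :=
  fun x => ⨆ i : ℤ × (Fin n → ℤ), (cube n i).indicator
    (fun _ => if K₀ ≤ i.1 then dyAvg μ f (cube n i) else 0) x

lemma maxFn_measurable (K₀ : ℤ) : Measurable (maxFn μ f K₀) :=
  Measurable.iSup fun i => Measurable.indicator measurable_const (cube_measurable i)

lemma lt_maxFn_iff {K₀ : ℤ} {τ : ℝ≥0∞} {x : Fin n → ℝ} :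
    τ < maxFn μ f K₀ x ↔ ∃ i, K₀ ≤ i.1 ∧ τ < dyAvg μ f (cube n i) ∧ x ∈ cube n i := by
  rw [maxFn, lt_iSup_iff]
  constructor
  · rintro ⟨i, hi⟩
    by_cases hx : x ∈ cube n i
    · rw [Set.indicator_of_mem hx] at hi
      by_cases hK : K₀ ≤ i.1
      · rw [if_pos hK] at hi; exact ⟨i, hK, hi, hx⟩
      · rw [if_neg hK] at hi; exact absurd hi (by simp)
    · rw [Set.indicator_of_notMem hx] at hi; exact absurd hi (by simp)
  · rintro ⟨i, hK, hτ, hx⟩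
    exact ⟨i, by rw [Set.indicator_of_mem hx, if_pos hK]; exact hτ⟩

lemma setOf_lt_maxFn_eq (K₀ : ℤ) (τ : ℝ≥0∞) :
    {x | τ < maxFn μ f K₀ x} =
      ⋃ i ∈ {i : ℤ × (Fin n → ℤ) | K₀ ≤ i.1 ∧ τ < dyAvg μ f (cube n i)}, cube n i := by
  ext x
  simp only [Set.mem_setOf_eq, lt_maxFn_iff, Set.mem_iUnion, exists_prop]
  tauto

lemma stopping_bounds (w : ℤ × (Fin n → ℤ) → ℝ≥0∞) (A : ℝ≥0∞)
    (hw : ∀ R : ℤ × (Fin n → ℤ),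
      (∑' i : {i : ℤ × (Fin n → ℤ) // cube n i ⊆ cube n R}, w i) ≤ A * μ (cube n R))
    (K₀ : ℤ) {τ : ℝ≥0∞} (hτ0 : τ ≠ 0) (hτtop : τ ≠ ⊤) :
    (∑' i : {i : ℤ × (Fin n → ℤ) // K₀ ≤ i.1 ∧ τ < dyAvg μ f (cube n i)}, w i)
        ≤ A * μ {x | τ < maxFn μ f K₀ x} ∧
    μ {x | τ < maxFn μ f K₀ x} ≤ τ⁻¹ * ∫⁻ x in {x | τ < maxFn μ f K₀ x}, f x ∂μ ∧
    μ {x | τ < maxFn μ f K₀ x} ≤ (τ/2)⁻¹ * ∫⁻ x, ({y | τ/2 < f y}.indicator f) x ∂μ := by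
  classical
  obtain ⟨M, hM1, hM2, hM3, hM4⟩ := exists_stopping μ f τ K₀
  have hU : {x | τ < maxFn μ f K₀ x} = ⋃ j ∈ M, cube n j := by
    rw [setOf_lt_maxFn_eq, ← hM3]
  have hMc : M.Countable := M.to_countable
  have hμU : μ {x | τ < maxFn μ f K₀ x} = ∑' (j : M), μ (cube n (j : ℤ × (Fin n → ℤ))) := by
    rw [hU]; exact measure_biUnion hMc hM2 (fun b _ => cube_measurable b)
  have hjτ : ∀ j : M, τ < dyAvg μ f (cube n (j : ℤ × (Fin n → ℤ))) := fun j => (hM1 j j.2).2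
  refine ⟨?_, ?_, ?_⟩
  · -- Carleson sum bound
    set φ : {i : ℤ × (Fin n → ℤ) // K₀ ≤ i.1 ∧ τ < dyAvg μ f (cube n i)} →
        Σ j : M, {i' : ℤ × (Fin n → ℤ) // cube n i' ⊆ cube n (j : ℤ × (Fin n → ℤ))} :=
      fun i => ⟨⟨Classical.choose (hM4 i.1 i.2.1 i.2.2),
        (Classical.choose_spec (hM4 i.1 i.2.1 i.2.2)).1⟩,
        ⟨i.1, (Classical.choose_spec (hM4 i.1 i.2.1 i.2.2)).2⟩⟩ with hφ
    have hinj : Function.Injective φ := by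
      intro i1 i2 h
      have := congrArg (fun x : Σ j : M,
        {i' : ℤ × (Fin n → ℤ) // cube n i' ⊆ cube n (j : ℤ × (Fin n → ℤ))} =>
          (x.2 : ℤ × (Fin n → ℤ))) h
      exact Subtype.ext this
    calc (∑' i : {i : ℤ × (Fin n → ℤ) // K₀ ≤ i.1 ∧ τ < dyAvg μ f (cube n i)}, w i)
        = ∑' i : {i : ℤ × (Fin n → ℤ) // K₀ ≤ i.1 ∧ τ < dyAvg μ f (cube n i)},
            (fun x : Σ j : M, {i' : ℤ × (Fin n → ℤ) //
              cube n i' ⊆ cube n (j : ℤ × (Fin n → ℤ))} => w x.2) (φ i) := rfl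
    _ ≤ ∑' (x : Σ j : M, {i' : ℤ × (Fin n → ℤ) //
          cube n i' ⊆ cube n (j : ℤ × (Fin n → ℤ))}), w x.2 :=
        ENNReal.tsum_comp_le_tsum_of_injective hinj _
    _ = ∑' (j : M), ∑' (i' : {i' : ℤ × (Fin n → ℤ) //
          cube n i' ⊆ cube n (j : ℤ × (Fin n → ℤ))}), w i' :=
        ENNReal.tsum_sigma (β := fun j : M => {i' : ℤ × (Fin n → ℤ) //
          cube n i' ⊆ cube n (j : ℤ × (Fin n → ℤ))}) (fun j i' => w i')
    _ ≤ ∑' (j : M), A * μ (cube n (j : ℤ × (Fin n → ℤ))) :=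
        ENNReal.tsum_le_tsum (fun j => hw (j : ℤ × (Fin n → ℤ)))
    _ = A * ∑' (j : M), μ (cube n (j : ℤ × (Fin n → ℤ))) := ENNReal.tsum_mul_left
    _ = A * μ {x | τ < maxFn μ f K₀ x} := by rw [hμU]
  · rw [hμU, hU]
    calc (∑' (j : M), μ (cube n (j : ℤ × (Fin n → ℤ))))
        ≤ ∑' (j : M), τ⁻¹ * ∫⁻ x in cube n (j : ℤ × (Fin n → ℤ)), f x ∂μ :=
        ENNReal.tsum_le_tsum fun j =>
          avg_mul_bound μ f hτ0 hτtop (cube_measure_lt_top μ _).ne (hjτ j)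
    _ = τ⁻¹ * ∑' (j : M), ∫⁻ x in cube n (j : ℤ × (Fin n → ℤ)), f x ∂μ := ENNReal.tsum_mul_left
    _ = τ⁻¹ * ∫⁻ x in ⋃ j ∈ M, cube n j, f x ∂μ := by
        rw [lintegral_biUnion hMc (fun b _ => cube_measurable b) hM2]
  · have hσ0 : τ / 2 ≠ 0 := by simp [ENNReal.div_eq_zero_iff, hτ0]
    rw [hμU]
    calc (∑' (j : M), μ (cube n (j : ℤ × (Fin n → ℤ))))
        ≤ ∑' (j : M), (τ/2)⁻¹ * ∫⁻ x in cube n (j : ℤ × (Fin n → ℤ)),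
            ({y | τ/2 < f y}.indicator f) x ∂μ :=
        ENNReal.tsum_le_tsum fun j =>
          avg_mul_bound μ _ hσ0 (by simp [ENNReal.div_eq_top, hτtop])
            (cube_measure_lt_top μ _).ne
            (avg_CZ μ f hτtop (cube_measure_lt_top μ _).ne (hjτ j))
    _ = (τ/2)⁻¹ * ∑' (j : M), ∫⁻ x in cube n (j : ℤ × (Fin n → ℤ)),
          ({y | τ/2 < f y}.indicator f) x ∂μ := ENNReal.tsum_mul_left
    _ = (τ/2)⁻¹ * ∫⁻ x in ⋃ j ∈ M, cube n j, ({y | τ/2 < f y}.indicator f) x ∂μ := by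
        rw [lintegral_biUnion hMc (fun b _ => cube_measurable b) hM2]
    _ ≤ (τ/2)⁻¹ * ∫⁻ x, ({y | τ/2 < f y}.indicator f) x ∂μ :=
        mul_le_mul_right (setLIntegral_le_lintegral _ _) _

end Bounds


lemma meas_ite_lt (s : ℝ≥0∞) : MeasurableSet {t : ℝ | ENNReal.ofReal t < s} :=
  ENNReal.measurable_ofReal measurableSet_Iio

lemma sc_integrand_measurable {q : ℝ} (s : ℝ≥0∞) :
    Measurable fun t : ℝ => ENNReal.ofReal (q * t ^ (q - 1)) *
      (if ENNReal.ofReal t < s then (1:ℝ≥0∞) else 0) := by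
  apply Measurable.mul
  · exact (measurable_const.mul (measurable_id.pow_const _ |>.comp measurable_id)).ennreal_ofReal
      |>.comp measurable_id
  · exact Measurable.ite (meas_ite_lt s) measurable_const measurable_const

lemma sc {q : ℝ} (hq : 0 < q) (s : ℝ≥0∞) :
    (∫⁻ t in Set.Ioi (0:ℝ), ENNReal.ofReal (q * t ^ (q - 1)) *
      (if ENNReal.ofReal t < s then 1 else 0)) = s ^ q := by
  rcases eq_or_ne s 0 with rfl | hs0
  · simp [ENNReal.zero_rpow_of_pos hq]
  rcases eq_or_ne s ⊤ with rfl | hstop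
  · have hcond : ∀ t : ℝ, (if ENNReal.ofReal t < (⊤:ℝ≥0∞) then (1:ℝ≥0∞) else 0) = 1 := by
      intro t; rw [if_pos (ENNReal.ofReal_lt_top)]
    simp only [hcond, mul_one]
    rw [ENNReal.top_rpow_of_pos hq]
    have hmeas : Measurable fun t : ℝ => q * t ^ (q - 1) :=
      measurable_const.mul (measurable_id.pow_const _)
    have hne : (∫⁻ t in Set.Ioi (1:ℝ), ENNReal.ofReal (q * t ^ (q - 1))) = ⊤ := by
      by_contra hfin
      have hint : Integrable (fun t : ℝ => q * t ^ (q - 1))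
          (volume.restrict (Set.Ioi (1:ℝ))) := by
        constructor
        · exact hmeas.aestronglyMeasurable
        · rw [hasFiniteIntegral_iff_ofReal ?_]
          · exact lt_top_iff_ne_top.mpr hfin
          · filter_upwards [ae_restrict_mem measurableSet_Ioi] with t ht
            have : (0:ℝ) < t := lt_trans zero_lt_one ht
            positivity
      have hint2 : IntegrableOn (fun t : ℝ => t ^ (q - 1)) (Set.Ioi (1:ℝ)) := by
        have := hint.const_mul q⁻¹
        simpa [IntegrableOn, ← mul_assoc, inv_mul_cancel₀ hq.ne'] using this
      rw [integrableOn_Ioi_rpow_iff zero_lt_one] at hint2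
      linarith
    rw [eq_top_iff, ← hne]
    exact lintegral_mono_set (Set.Ioi_subset_Ioi zero_le_one)
  · -- finite positive case
    set c := s.toReal with hc
    have hcpos : 0 < c := ENNReal.toReal_pos hs0 hstop
    have hsc : s = ENNReal.ofReal c := (ENNReal.ofReal_toReal hstop).symm
    have hcond : ∀ t : ℝ, (if ENNReal.ofReal t < s then (1:ℝ≥0∞) else 0) =
        (Set.Iio c).indicator (fun _ => (1:ℝ≥0∞)) t := by
      intro t
      rw [Set.indicator_apply]
      congr 1
      simp only [Set.mem_Iio, eq_iff_iff, hsc]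
      exact ENNReal.ofReal_lt_ofReal_iff hcpos
    calc (∫⁻ t in Set.Ioi (0:ℝ), ENNReal.ofReal (q * t ^ (q - 1)) *
          (if ENNReal.ofReal t < s then 1 else 0))
        = ∫⁻ t in Set.Ioi (0:ℝ), (Set.Iio c).indicator
            (fun t => ENNReal.ofReal (q * t ^ (q - 1))) t := by
          apply lintegral_congr
          intro t
          rw [hcond t, Set.indicator_apply, Set.indicator_apply]
          by_cases h : t ∈ Set.Iio c <;> simp [h]
    _ = ∫⁻ t in Set.Iio c ∩ Set.Ioi (0:ℝ), ENNReal.ofReal (q * t ^ (q - 1)) := by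
          rw [lintegral_indicator measurableSet_Iio, Measure.restrict_restrict measurableSet_Iio]
    _ = ∫⁻ t in Set.Ioo (0:ℝ) c, ENNReal.ofReal (q * t ^ (q - 1)) := by
          rw [Set.inter_comm, Set.Ioi_inter_Iio]
    _ = ENNReal.ofReal (∫ t in Set.Ioo (0:ℝ) c, q * t ^ (q - 1)) := by
          rw [ofReal_integral_eq_lintegral_ofReal]
          · have : IntegrableOn (fun t : ℝ => t ^ (q - 1)) (Set.Ioo (0:ℝ) c) := by
              have h1 : IntervalIntegrable (fun t : ℝ => t ^ (q - 1)) volume 0 c :=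
                intervalIntegral.intervalIntegrable_rpow' (by linarith)
              rw [intervalIntegrable_iff_integrableOn_Ioo_of_le hcpos.le] at h1
              exact h1
            exact this.const_mul q
          · filter_upwards [ae_restrict_mem measurableSet_Ioo] with t ht
            have : (0:ℝ) < t := ht.1
            positivity
    _ = ENNReal.ofReal (c ^ q) := by
          congr 1
          rw [← MeasureTheory.integral_Ioc_eq_integral_Ioo,
            ← intervalIntegral.integral_of_le hcpos.le]
          rw [intervalIntegral.integral_const_mul, integral_rpow (Or.inl (by linarith))]
          rw [sub_add_cancel]
          rw [Real.zero_rpow hq.ne']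
          field_simp
          simp
    _ = s ^ q := by
          rw [hsc, ENNReal.ofReal_rpow_of_pos hcpos]



lemma self_mul_rpow {p q : ℝ} (hq : 0 < q) (hpq : 1 + q = p) (x : ℝ≥0∞) :
    x * x ^ q = x ^ p := by
  rcases eq_or_ne x 0 with rfl | hx0
  · rw [ENNReal.zero_rpow_of_pos hq, ENNReal.zero_rpow_of_pos (by linarith), mul_zero]
  rcases eq_or_ne x ⊤ with rfl | hxtop
  · rw [ENNReal.top_rpow_of_pos hq, ENNReal.top_rpow_of_pos (by linarith), mul_top]
    exact top_ne_zero
  · rw [← hpq, ENNReal.rpow_add 1 q hx0 hxtop, ENNReal.rpow_one]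


section Key
variable {n : ℕ} (μ : Measure (Fin n → ℝ)) [IsLocallyFiniteMeasure μ]
  (f : (Fin n → ℝ) → ℝ≥0∞)

lemma key_bound (hf : Measurable f) (w : ℤ × (Fin n → ℤ) → ℝ≥0∞) (A : ℝ≥0∞)
    (hw : ∀ R : ℤ × (Fin n → ℤ),
      (∑' i : {i : ℤ × (Fin n → ℤ) // cube n i ⊆ cube n R}, w i) ≤ A * μ (cube n R))
    {p : ℝ} (hp : 1 < p) (hFfin : (∫⁻ x, f x ^ p ∂μ) ≠ ⊤) (K₀ : ℤ) :
    (∑' i : {i : ℤ × (Fin n → ℤ) // K₀ ≤ i.1}, dyAvg μ f (cube n (i : ℤ × (Fin n → ℤ))) ^ p * w i)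
      ≤ ENNReal.ofReal ((p / (p - 1)) ^ p) * A * ∫⁻ x, f x ^ p ∂μ := by
  classical
  set q : ℝ := p - 1 with hqdef
  have hq : 0 < q := by simp only [hqdef]; linarith
  have hp0 : 0 < p := by linarith
  set r : ℝ := p / (p - 1) with hrdef
  have hr1 : 1 < r := by
    rw [hrdef]
    rw [lt_div_iff₀ (by linarith)]
    linarith
  have hr0 : 0 < r := by linarith
  have hqr : q * r = p := by rw [hqdef, hrdef]; field_simp; exact div_self (by linarith)
  have hrinvp : r⁻¹ * p = q := by
    rw [hrdef, hqdef]; field_simp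
  set F := ∫⁻ x, f x ^ p ∂μ with hF
  set a := fun i : ℤ × (Fin n → ℤ) => dyAvg μ f (cube n i) with ha
  set m := maxFn μ f K₀ with hm
  have hmeas_m : Measurable m := maxFn_measurable μ f K₀
  -- basic measurability on the product space
  have hite_meas : ∀ (g : (Fin n → ℝ) → ℝ≥0∞), Measurable g →
      Measurable (Function.uncurry fun (t : ℝ) (x : Fin n → ℝ) =>
        (if ENNReal.ofReal t < g x then (1:ℝ≥0∞) else 0)) := by
    intro g hg
    have hset : MeasurableSet {z : ℝ × (Fin n → ℝ) | ENNReal.ofReal z.1 < g z.2} :=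
      measurableSet_lt (ENNReal.measurable_ofReal.comp measurable_fst) (hg.comp measurable_snd)
    exact Measurable.ite hset measurable_const measurable_const
  have hite_meas_t : ∀ (g : (Fin n → ℝ) → ℝ≥0∞), Measurable g → ∀ (t : ℝ),
      Measurable (fun x : Fin n → ℝ => (if ENNReal.ofReal t < g x then (1:ℝ≥0∞) else 0)) := by
    intro g hg t
    exact Measurable.ite (measurableSet_lt measurable_const hg) measurable_const measurable_const
  have h_cp_meas : Measurable fun t : ℝ => ENNReal.ofReal (p * t ^ (p - 1)) :=
    (measurable_const.mul (measurable_id.pow_const _)).ennreal_ofReal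
  have h_cq_meas : Measurable fun t : ℝ => ENNReal.ofReal (q * t ^ (q - 1)) :=
    (measurable_const.mul (measurable_id.pow_const _)).ennreal_ofReal
  -- the distribution function
  set J : ℝ → ℝ≥0∞ :=
    fun t => ∫⁻ x, (if ENNReal.ofReal t < m x then (1:ℝ≥0∞) else 0) ∂μ with hJ
  have hJ_meas : Measurable J := Measurable.lintegral_prod_right (hite_meas m hmeas_m)
  have hUmeas : ∀ t : ℝ, MeasurableSet {x | ENNReal.ofReal t < m x} := fun t =>
    measurableSet_lt measurable_const hmeas_m
  have hJ_eq : ∀ t : ℝ, J t = μ {x | ENNReal.ofReal t < m x} := by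
    intro t
    rw [hJ, ← lintegral_indicator_one (hUmeas t)]
    apply lintegral_congr
    intro x
    rw [Set.indicator_apply]
    by_cases h : ENNReal.ofReal t < m x <;> simp [h]
  set Y' := ∫⁻ t in Set.Ioi (0:ℝ), ENNReal.ofReal (p * t ^ (p - 1)) * J t with hY'
  set Y := ∫⁻ x, m x ^ p ∂μ with hY
  set Z := ∫⁻ x, f x * m x ^ q ∂μ with hZ
  set W : ℝ → ℝ≥0∞ :=
    fun t => ∫⁻ x, f x * (if ENNReal.ofReal t < m x then (1:ℝ≥0∞) else 0) ∂μ with hWdef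
  set G : ℝ → ℝ≥0∞ :=
    fun t => ∫⁻ x, f x * (if ENNReal.ofReal t < 2 * f x then (1:ℝ≥0∞) else 0) ∂μ with hGdef
  have hW_prodmeas : Measurable (Function.uncurry fun (t:ℝ) (x : Fin n → ℝ) =>
      f x * (if ENNReal.ofReal t < m x then (1:ℝ≥0∞) else 0)) :=
    (hf.comp measurable_snd).mul (hite_meas m hmeas_m)
  have hG_prodmeas : Measurable (Function.uncurry fun (t:ℝ) (x : Fin n → ℝ) =>
      f x * (if ENNReal.ofReal t < 2 * f x then (1:ℝ≥0∞) else 0)) :=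
    (hf.comp measurable_snd).mul (hite_meas (fun x => 2 * f x) (hf.const_mul 2))
  have hW_meas : Measurable W := Measurable.lintegral_prod_right hW_prodmeas
  have hG_meas : Measurable G := Measurable.lintegral_prod_right hG_prodmeas
  have hτ0 : ∀ t : ℝ, t ∈ Set.Ioi (0:ℝ) → (ENNReal.ofReal t ≠ 0) := fun t ht =>
    (ENNReal.ofReal_pos.mpr ht).ne'
  -- Step 2 : layer cake identity Y = Y'
  have step2 : Y = Y' := by
    rw [hY, hY']
    calc (∫⁻ x, m x ^ p ∂μ)
        = ∫⁻ x, ∫⁻ t in Set.Ioi (0:ℝ), ENNReal.ofReal (p * t ^ (p - 1)) *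
            (if ENNReal.ofReal t < m x then 1 else 0) ∂volume ∂μ :=
          lintegral_congr fun x => (sc hp0 (m x)).symm
      _ = ∫⁻ t in Set.Ioi (0:ℝ), ∫⁻ x, ENNReal.ofReal (p * t ^ (p - 1)) *
            (if ENNReal.ofReal t < m x then 1 else 0) ∂μ := by
          apply lintegral_lintegral_swap
          exact ((h_cp_meas.comp measurable_snd).mul
            ((hite_meas m hmeas_m).comp measurable_swap)).aemeasurable
      _ = ∫⁻ t in Set.Ioi (0:ℝ), ENNReal.ofReal (p * t ^ (p - 1)) * J t :=
          lintegral_congr fun t => lintegral_const_mul _ (hite_meas_t m hmeas_m t)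
  -- Step 1 : Carleson sum bounded by A * Y'
  have step1 : (∑' i : {i : ℤ × (Fin n → ℤ) // K₀ ≤ i.1}, a (i : ℤ × (Fin n → ℤ)) ^ p * w i)
      ≤ A * Y' := by
    have hSC : ∀ i : {i : ℤ × (Fin n → ℤ) // K₀ ≤ i.1},
        a (i : ℤ × (Fin n → ℤ)) ^ p * w (i : ℤ × (Fin n → ℤ)) =
        ∫⁻ t in Set.Ioi (0:ℝ), (ENNReal.ofReal (p * t ^ (p - 1)) *
          (if ENNReal.ofReal t < a (i : ℤ × (Fin n → ℤ)) then 1 else 0)) *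
            w (i : ℤ × (Fin n → ℤ)) := by
      intro i
      rw [lintegral_mul_const _ (sc_integrand_measurable _), sc hp0]
    calc (∑' i : {i : ℤ × (Fin n → ℤ) // K₀ ≤ i.1}, a (i : ℤ × (Fin n → ℤ)) ^ p * w i)
        = ∑' i : {i : ℤ × (Fin n → ℤ) // K₀ ≤ i.1}, ∫⁻ t in Set.Ioi (0:ℝ),
            (ENNReal.ofReal (p * t ^ (p - 1)) *
              (if ENNReal.ofReal t < a (i : ℤ × (Fin n → ℤ)) then 1 else 0)) * w i :=
          tsum_congr hSC
      _ = ∫⁻ t in Set.Ioi (0:ℝ), ∑' i : {i : ℤ × (Fin n → ℤ) // K₀ ≤ i.1},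
            (ENNReal.ofReal (p * t ^ (p - 1)) *
              (if ENNReal.ofReal t < a (i : ℤ × (Fin n → ℤ)) then 1 else 0)) * w i :=
          (lintegral_tsum fun i =>
            ((sc_integrand_measurable _).mul_const _).aemeasurable).symm
      _ ≤ ∫⁻ t in Set.Ioi (0:ℝ), ENNReal.ofReal (p * t ^ (p - 1)) * (A * J t) := by
          apply setLIntegral_mono (h_cp_meas.mul (measurable_const.mul hJ_meas))
          intro t ht
          have hrw : ∀ i : {i : ℤ × (Fin n → ℤ) // K₀ ≤ i.1},
              (ENNReal.ofReal (p * t ^ (p - 1)) *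
                (if ENNReal.ofReal t < a (i : ℤ × (Fin n → ℤ)) then 1 else 0)) *
                  w (i : ℤ × (Fin n → ℤ)) =
              ENNReal.ofReal (p * t ^ (p - 1)) *
                (if ENNReal.ofReal t < a (i : ℤ × (Fin n → ℤ))
                  then w (i : ℤ × (Fin n → ℤ)) else 0) := by
            intro i
            by_cases h : ENNReal.ofReal t < a (i : ℤ × (Fin n → ℤ)) <;>
              simp [h, mul_assoc]
          rw [tsum_congr hrw, ENNReal.tsum_mul_left]
          apply mul_le_mul_right
          -- inner sum bound
          set v : ℤ × (Fin n → ℤ) → ℝ≥0∞ :=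
            fun i => if K₀ ≤ i.1 ∧ ENNReal.ofReal t < a i then w i else 0 with hvdef
          have h1 : ∀ i : {i : ℤ × (Fin n → ℤ) // K₀ ≤ i.1},
              (if ENNReal.ofReal t < a (i : ℤ × (Fin n → ℤ))
                then w (i : ℤ × (Fin n → ℤ)) else 0) = v (i : ℤ × (Fin n → ℤ)) := by
            intro i
            by_cases h : ENNReal.ofReal t < a (i : ℤ × (Fin n → ℤ))
            · simp only [hvdef]
              rw [if_pos h, if_pos (show K₀ ≤ (i : ℤ × (Fin n → ℤ)).1 ∧
                ENNReal.ofReal t < a (i : ℤ × (Fin n → ℤ)) from ⟨i.2, h⟩)]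
            · simp only [hvdef]
              rw [if_neg h, if_neg (fun hc => h hc.2)]
          rw [tsum_congr h1]
          have h2 : (∑' i : {i : ℤ × (Fin n → ℤ) // K₀ ≤ i.1}, v (i : ℤ × (Fin n → ℤ)))
              ≤ ∑' i, v i := ENNReal.tsum_comp_le_tsum_of_injective Subtype.val_injective v
          have h3 : (∑' i, v i) = ∑' i : {i : ℤ × (Fin n → ℤ) //
              K₀ ≤ i.1 ∧ ENNReal.ofReal t < a i}, w (i : ℤ × (Fin n → ℤ)) := by
            rw [← tsum_subtype_eq_of_support_subset (s := {i : ℤ × (Fin n → ℤ) |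
              K₀ ≤ i.1 ∧ ENNReal.ofReal t < a i}) ?_]
            · apply tsum_congr
              intro i
              rw [hvdef]; exact if_pos i.2
            · intro i hi
              by_contra hc
              apply hi
              rw [hvdef]; exact if_neg hc
          have h4 := (stopping_bounds μ f w A hw K₀ (hτ0 t ht) ENNReal.ofReal_ne_top).1
          show _ ≤ A * J t
          rw [hJ_eq t]
          exact h2.trans (h3 ▸ h4)
      _ = A * Y' := by
          rw [hY', ← lintegral_const_mul A (f := fun t => ENNReal.ofReal (p * t ^ (p - 1)) * J t) (h_cp_meas.mul hJ_meas)]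
          apply lintegral_congr
          intro t
          rw [mul_left_comm]
  -- rewriting W as a set integral
  have hW_setint : ∀ t : ℝ, W t = ∫⁻ x in {x | ENNReal.ofReal t < m x}, f x ∂μ := by
    intro t
    rw [hWdef, ← lintegral_indicator (hUmeas t)]
    apply lintegral_congr
    intro x
    rw [Set.indicator_apply]
    by_cases h : ENNReal.ofReal t < m x <;> simp [h]
  -- Step 3 : Y' ≤ r * Z
  have step3 : Y' ≤ ENNReal.ofReal r * Z := by
    have hbound : ∀ t ∈ Set.Ioi (0:ℝ), ENNReal.ofReal (p * t ^ (p-1)) * J t ≤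
        ENNReal.ofReal r * (ENNReal.ofReal (q * t ^ (q-1)) * W t) := by
      intro t ht
      have ht' : (0:ℝ) < t := ht
      have hwk := (stopping_bounds μ f w A hw K₀ (hτ0 t ht) ENNReal.ofReal_ne_top).2.1
      rw [← hW_setint t] at hwk
      rw [hJ_eq t]
      have hconst : p * t ^ (p-1) / t = r * (q * t ^ (q-1)) := by
        have h1 : t ^ (p - 1) = t ^ (q - 1) * t := by
          have h2 : p - 1 = (q - 1) + 1 := by rw [hqdef]; ring
          rw [h2, Real.rpow_add ht' _ _, Real.rpow_one]
        have h3 : r * (q * t ^ (q-1)) = p * t ^ (q-1) := by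
          rw [← hqr]; ring
        rw [h1, h3]
        field_simp [ht'.ne']
        try ring
      calc ENNReal.ofReal (p * t ^ (p-1)) * μ {x | ENNReal.ofReal t < m x}
          ≤ ENNReal.ofReal (p * t ^ (p-1)) * ((ENNReal.ofReal t)⁻¹ * W t) :=
            mul_le_mul_right hwk _
        _ = (ENNReal.ofReal (p * t ^ (p-1)) * (ENNReal.ofReal t)⁻¹) * W t := by
            rw [mul_assoc]
        _ = ENNReal.ofReal r * (ENNReal.ofReal (q * t ^ (q-1)) * W t) := by
            rw [← mul_assoc]
            congr 1
            calc ENNReal.ofReal (p * t ^ (p-1)) * (ENNReal.ofReal t)⁻¹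
                = ENNReal.ofReal (p * t ^ (p-1)) / ENNReal.ofReal t := by
                  rw [div_eq_mul_inv]
              _ = ENNReal.ofReal (p * t ^ (p-1) / t) :=
                  (ENNReal.ofReal_div_of_pos ht').symm
              _ = ENNReal.ofReal (r * (q * t ^ (q-1))) := by rw [hconst]
              _ = ENNReal.ofReal r * ENNReal.ofReal (q * t ^ (q-1)) :=
                  ENNReal.ofReal_mul hr0.le
    calc Y' ≤ ∫⁻ t in Set.Ioi (0:ℝ), ENNReal.ofReal r *
          (ENNReal.ofReal (q * t ^ (q-1)) * W t) := by
          rw [hY']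
          exact setLIntegral_mono (measurable_const.mul (h_cq_meas.mul hW_meas)) hbound
      _ = ENNReal.ofReal r * ∫⁻ t in Set.Ioi (0:ℝ),
          ENNReal.ofReal (q * t ^ (q-1)) * W t :=
          lintegral_const_mul _ (h_cq_meas.mul hW_meas)
      _ = ENNReal.ofReal r * Z := by
          congr 1
          calc (∫⁻ t in Set.Ioi (0:ℝ), ENNReal.ofReal (q * t ^ (q-1)) * W t)
              = ∫⁻ t in Set.Ioi (0:ℝ), ∫⁻ x, f x * (ENNReal.ofReal (q * t ^ (q-1)) *
                  (if ENNReal.ofReal t < m x then 1 else 0)) ∂μ := by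
                apply lintegral_congr
                intro t
                rw [hWdef, ← lintegral_const_mul _ (f := fun x => f x * (if ENNReal.ofReal t < m x then (1:ℝ≥0∞) else 0)) (hf.mul (hite_meas_t m hmeas_m t))]
                apply lintegral_congr
                intro x
                rw [mul_left_comm]
            _ = ∫⁻ x, ∫⁻ t in Set.Ioi (0:ℝ), f x * (ENNReal.ofReal (q * t ^ (q-1)) *
                  (if ENNReal.ofReal t < m x then 1 else 0)) ∂volume ∂μ := by
                apply (lintegral_lintegral_swap ?_).symm
                apply Measurable.aemeasurable
                exact (hf.comp measurable_fst).mul (((h_cq_meas.comp measurable_snd)).mul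
                  ((hite_meas m hmeas_m).comp measurable_swap))
            _ = Z := by
                rw [hZ]
                apply lintegral_congr
                intro x
                rw [lintegral_const_mul _ (sc_integrand_measurable _), sc hq]
  -- Step 5 : qualitative bound, Y' is finite
  have hGform : ∀ t : ℝ, (∫⁻ x, ({y | ENNReal.ofReal t / 2 < f y}.indicator f) x ∂μ) = G t := by
    intro t
    rw [hGdef]
    apply lintegral_congr
    intro x
    rw [Set.indicator_apply]
    have hiff : (x ∈ {y | ENNReal.ofReal t / 2 < f y}) ↔ (ENNReal.ofReal t < 2 * f x) := by
      simp only [Set.mem_setOf_eq]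
      rw [ENNReal.div_lt_iff (Or.inl two_ne_zero) (Or.inl ENNReal.ofNat_ne_top), mul_comm]
    by_cases h : ENNReal.ofReal t < 2 * f x
    · rw [if_pos (hiff.mpr h), if_pos h, mul_one]
    · rw [if_neg (fun hc => h (hiff.mp hc)), if_neg h, mul_zero]
  have step5 : Y' ≤ ENNReal.ofReal (2 * r) * ((2:ℝ≥0∞) ^ q * F) := by
    have hbound : ∀ t ∈ Set.Ioi (0:ℝ), ENNReal.ofReal (p * t ^ (p-1)) * J t ≤
        ENNReal.ofReal (2 * r) * (ENNReal.ofReal (q * t ^ (q-1)) * G t) := by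
      intro t ht
      have ht' : (0:ℝ) < t := ht
      have hwk := (stopping_bounds μ f w A hw K₀ (hτ0 t ht) ENNReal.ofReal_ne_top).2.2
      rw [hGform t] at hwk
      rw [hJ_eq t]
      have hconst : p * t ^ (p-1) / (t / 2) = (2 * r) * (q * t ^ (q-1)) := by
        have h1 : t ^ (p - 1) = t ^ (q - 1) * t := by
          have h2 : p - 1 = (q - 1) + 1 := by rw [hqdef]; ring
          rw [h2, Real.rpow_add ht' _ _, Real.rpow_one]
        have h3 : (2 * r) * (q * t ^ (q-1)) = 2 * (p * t ^ (q-1)) := by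
          rw [← hqr]; ring
        rw [h1, h3]
        field_simp [ht'.ne']
        try ring
      calc ENNReal.ofReal (p * t ^ (p-1)) * μ {x | ENNReal.ofReal t < m x}
          ≤ ENNReal.ofReal (p * t ^ (p-1)) * ((ENNReal.ofReal t / 2)⁻¹ * G t) :=
            mul_le_mul_right hwk _
        _ = (ENNReal.ofReal (p * t ^ (p-1)) * (ENNReal.ofReal (t / 2))⁻¹) * G t := by
            rw [mul_assoc]
            congr 2
            rw [ENNReal.ofReal_div_of_pos (by norm_num : (0:ℝ) < 2), ENNReal.ofReal_ofNat]
        _ = ENNReal.ofReal (2 * r) * (ENNReal.ofReal (q * t ^ (q-1)) * G t) := by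
            rw [← mul_assoc]
            congr 1
            calc ENNReal.ofReal (p * t ^ (p-1)) * (ENNReal.ofReal (t / 2))⁻¹
                = ENNReal.ofReal (p * t ^ (p-1)) / ENNReal.ofReal (t / 2) := by
                  rw [ENNReal.div_eq_inv_mul, mul_comm]
              _ = ENNReal.ofReal (p * t ^ (p-1) / (t / 2)) :=
                  (ENNReal.ofReal_div_of_pos (by positivity)).symm
              _ = ENNReal.ofReal ((2 * r) * (q * t ^ (q-1))) := by rw [hconst]
              _ = ENNReal.ofReal (2 * r) * ENNReal.ofReal (q * t ^ (q-1)) :=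
                  ENNReal.ofReal_mul (by positivity)
    calc Y' ≤ ∫⁻ t in Set.Ioi (0:ℝ), ENNReal.ofReal (2 * r) *
          (ENNReal.ofReal (q * t ^ (q-1)) * G t) := by
          rw [hY']
          exact setLIntegral_mono (measurable_const.mul (h_cq_meas.mul hG_meas)) hbound
      _ = ENNReal.ofReal (2 * r) * ∫⁻ t in Set.Ioi (0:ℝ),
          ENNReal.ofReal (q * t ^ (q-1)) * G t :=
          lintegral_const_mul _ (h_cq_meas.mul hG_meas)
      _ ≤ ENNReal.ofReal (2 * r) * ((2:ℝ≥0∞) ^ q * F) := by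
          apply mul_le_mul_right
          have hint : (∫⁻ t in Set.Ioi (0:ℝ), ENNReal.ofReal (q * t ^ (q-1)) * G t)
              = ∫⁻ x, f x * (2 * f x) ^ q ∂μ := by
            calc (∫⁻ t in Set.Ioi (0:ℝ), ENNReal.ofReal (q * t ^ (q-1)) * G t)
                = ∫⁻ t in Set.Ioi (0:ℝ), ∫⁻ x, f x * (ENNReal.ofReal (q * t ^ (q-1)) *
                    (if ENNReal.ofReal t < 2 * f x then 1 else 0)) ∂μ := by
                  apply lintegral_congr
                  intro t
                  rw [hGdef, ← lintegral_const_mul _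
                    (f := fun x => f x * (if ENNReal.ofReal t < 2 * f x then (1:ℝ≥0∞) else 0)) (hf.mul (hite_meas_t (fun x => 2 * f x) (hf.const_mul 2) t))]
                  apply lintegral_congr
                  intro x
                  rw [mul_left_comm]
              _ = ∫⁻ x, ∫⁻ t in Set.Ioi (0:ℝ), f x * (ENNReal.ofReal (q * t ^ (q-1)) *
                    (if ENNReal.ofReal t < 2 * f x then 1 else 0)) ∂volume ∂μ := by
                  apply (lintegral_lintegral_swap ?_).symm
                  apply Measurable.aemeasurable
                  exact (hf.comp measurable_fst).mul (((h_cq_meas.comp measurable_snd)).mul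
                    ((hite_meas (fun x => 2 * f x) (hf.const_mul 2)).comp measurable_swap))
              _ = ∫⁻ x, f x * (2 * f x) ^ q ∂μ := by
                  apply lintegral_congr
                  intro x
                  rw [lintegral_const_mul _ (sc_integrand_measurable _), sc hq]
          rw [hint]
          apply le_of_eq
          rw [hF, ← lintegral_const_mul _ (hf.pow_const p)]
          apply lintegral_congr
          intro x
          rw [ENNReal.mul_rpow_of_nonneg _ _ hq.le, mul_left_comm,
            self_mul_rpow hq (show 1 + q = p by rw [hqdef]; ring) (f x)]
  have hY'fin : Y' ≠ ⊤ := by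
    apply ne_top_of_le_ne_top _ step5
    exact ENNReal.mul_ne_top ENNReal.ofReal_ne_top
      (ENNReal.mul_ne_top (ENNReal.rpow_ne_top_of_nonneg hq.le ENNReal.ofNat_ne_top) hFfin)
  have hYfin : Y ≠ ⊤ := by rw [step2]; exact hY'fin
  -- Step 4 : Young's inequality
  have hpr : Real.HolderConjugate p r := (Real.holderConjugate_iff_eq_conjExponent hp).mpr hrdef
  set C : ℝ≥0∞ := ENNReal.ofReal (r ^ r⁻¹) with hC
  have hCr : (0:ℝ) < r ^ r⁻¹ := Real.rpow_pos_of_pos hr0 _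
  have hC0 : C ≠ 0 := by rw [hC]; exact (ENNReal.ofReal_pos.mpr hCr).ne'
  have hCtop : C ≠ ⊤ := by rw [hC]; exact ENNReal.ofReal_ne_top
  have hCp : C ^ p = ENNReal.ofReal (r ^ q) := by
    rw [hC, ENNReal.ofReal_rpow_of_pos hCr, ← Real.rpow_mul hr0.le, hrinvp]
  have hCrr : C ^ r = ENNReal.ofReal r := by
    rw [hC, ENNReal.ofReal_rpow_of_pos hCr, ← Real.rpow_mul hr0.le,
      inv_mul_cancel₀ hr0.ne', Real.rpow_one]
  have hyoung : ∀ x, f x * m x ^ q ≤ (ENNReal.ofReal p)⁻¹ * (C ^ p * f x ^ p) +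
      (ENNReal.ofReal r)⁻¹ * ((ENNReal.ofReal r)⁻¹ * m x ^ p) := by
    intro x
    have h0 : f x * m x ^ q = (C * f x) * (C⁻¹ * m x ^ q) := by
      rw [mul_mul_mul_comm, ENNReal.mul_inv_cancel hC0 hCtop, one_mul]
    rw [h0]
    refine (ENNReal.young_inequality _ _ hpr).trans (le_of_eq ?_)
    rw [ENNReal.mul_rpow_of_nonneg _ _ hp0.le, ENNReal.mul_rpow_of_nonneg _ _ hr0.le,
      ENNReal.inv_rpow, ← ENNReal.rpow_mul, hqr, hCrr,
      ENNReal.div_eq_inv_mul, ENNReal.div_eq_inv_mul]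
  have step4 : Z ≤ (ENNReal.ofReal p)⁻¹ * C ^ p * F +
      (ENNReal.ofReal r)⁻¹ * (ENNReal.ofReal r)⁻¹ * Y := by
    calc Z ≤ ∫⁻ x, ((ENNReal.ofReal p)⁻¹ * (C ^ p * f x ^ p) +
          (ENNReal.ofReal r)⁻¹ * ((ENNReal.ofReal r)⁻¹ * m x ^ p)) ∂μ :=
        lintegral_mono hyoung
      _ = (ENNReal.ofReal p)⁻¹ * C ^ p * F +
          (ENNReal.ofReal r)⁻¹ * (ENNReal.ofReal r)⁻¹ * Y := by
        rw [lintegral_add_left (((hf.pow_const p).const_mul _).const_mul _),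
          lintegral_const_mul _ ((hf.pow_const p).const_mul _),
          lintegral_const_mul _ (hf.pow_const p),
          lintegral_const_mul _ (((hmeas_m.pow_const p)).const_mul _),
          lintegral_const_mul _ (hmeas_m.pow_const p), hF, hY]
        ring
  have hr_ofReal0 : ENNReal.ofReal r ≠ 0 := (ENNReal.ofReal_pos.mpr hr0).ne'
  have hcomb : Y ≤ ENNReal.ofReal (r ^ p / p) * F + (ENNReal.ofReal r)⁻¹ * Y := by
    calc Y = Y' := step2
      _ ≤ ENNReal.ofReal r * Z := step3
      _ ≤ ENNReal.ofReal r * ((ENNReal.ofReal p)⁻¹ * C ^ p * F +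
          (ENNReal.ofReal r)⁻¹ * (ENNReal.ofReal r)⁻¹ * Y) := mul_le_mul_right step4 _
      _ = ENNReal.ofReal (r ^ p / p) * F + (ENNReal.ofReal r)⁻¹ * Y := by
          rw [mul_add]
          congr 1
          · rw [hCp, ← ENNReal.ofReal_inv_of_pos hp0, ← mul_assoc, ← mul_assoc,
              ← ENNReal.ofReal_mul hr0.le, ← ENNReal.ofReal_mul (by positivity)]
            congr 2
            rw [div_eq_mul_inv]
            have : r * r ^ q = r ^ p := by
              have h2 : p = 1 + q := by rw [hqdef]; ring
              rw [h2, Real.rpow_add hr0, Real.rpow_one]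
            rw [← this]
            ring
          · rw [← mul_assoc, ← mul_assoc, ENNReal.mul_inv_cancel hr_ofReal0
              ENNReal.ofReal_ne_top, one_mul]
  -- conclude Y ≤ r^p * F
  have hYb : Y ≤ ENNReal.ofReal (r ^ p) * F := by
    have hb : (ENNReal.ofReal r)⁻¹ = ENNReal.ofReal r⁻¹ :=
      (ENNReal.ofReal_inv_of_pos hr0).symm
    rw [hb] at hcomb
    have h1mb : (1:ℝ≥0∞) - ENNReal.ofReal r⁻¹ = ENNReal.ofReal p⁻¹ := by
      rw [← ENNReal.ofReal_one, ← ENNReal.ofReal_sub _ (by positivity)]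
      congr 1
      rw [hrdef]
      field_simp
      ring
    have hsub : (1 - ENNReal.ofReal r⁻¹) * Y ≤ ENNReal.ofReal (r ^ p / p) * F := by
      rw [ENNReal.sub_mul (fun _ _ => hYfin), one_mul]
      exact tsub_le_iff_right.mpr hcomb
    rw [h1mb] at hsub
    have hp_inv0 : ENNReal.ofReal p⁻¹ ≠ 0 := (ENNReal.ofReal_pos.mpr (by positivity)).ne'
    calc Y = (ENNReal.ofReal p⁻¹)⁻¹ * (ENNReal.ofReal p⁻¹ * Y) := by
          rw [← mul_assoc, ENNReal.inv_mul_cancel hp_inv0 ENNReal.ofReal_ne_top, one_mul]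
      _ ≤ (ENNReal.ofReal p⁻¹)⁻¹ * (ENNReal.ofReal (r ^ p / p) * F) :=
          mul_le_mul_right hsub _
      _ = ENNReal.ofReal (r ^ p) * F := by
          rw [ENNReal.ofReal_inv_of_pos hp0, inv_inv, ← mul_assoc,
            ← ENNReal.ofReal_mul hp0.le]
          congr 2
          field_simp
  calc (∑' i : {i : ℤ × (Fin n → ℤ) // K₀ ≤ i.1}, a (i : ℤ × (Fin n → ℤ)) ^ p * w i)
      ≤ A * Y' := step1
    _ = A * Y := by rw [step2]
    _ ≤ A * (ENNReal.ofReal (r ^ p) * F) := mul_le_mul_right hYb _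
    _ = ENNReal.ofReal (r ^ p) * A * F := by ring

end Key

end CarlAux

/-- Martingale Carleson Embedding Theorem for the standard dyadic lattice in `ℝⁿ`:
if `∑_{Q ⊆ R} w_Q ≤ A μ(R)` for every dyadic cube `R`, then for every measurable `f ≥ 0`
and every `p ∈ (1,∞)`,
`∑_Q (⨍_Q f dμ)^p w_Q ≤ (p')^p A ‖f‖_{L^p(μ)}^p` where `p' = p/(p-1)`. -/
theorem martingale_carleson_embedding {n : ℕ} (μ : Measure (Fin n → ℝ))
    [IsLocallyFiniteMeasure μ]
    (w : ℤ × (Fin n → ℤ) → ℝ≥0∞) (A : ℝ≥0∞)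
    (hw : ∀ (k : ℤ) (m : Fin n → ℤ),
      (∑' i : {i : ℤ × (Fin n → ℤ) // dyadicCube n i.1 i.2 ⊆ dyadicCube n k m}, w i) ≤
        A * μ (dyadicCube n k m))
    (f : (Fin n → ℝ) → ℝ≥0∞) (hf : Measurable f) (p : ℝ) (hp : 1 < p) :
    (∑' i : ℤ × (Fin n → ℤ), dyAvg μ f (dyadicCube n i.1 i.2) ^ p * w i) ≤
      ENNReal.ofReal ((p / (p - 1)) ^ p) * A * ∫⁻ x, f x ^ p ∂μ := by
  classical
  have hw' : ∀ R : ℤ × (Fin n → ℤ),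
      (∑' i : {i : ℤ × (Fin n → ℤ) // CarlAux.cube n i ⊆ CarlAux.cube n R}, w i)
        ≤ A * μ (CarlAux.cube n R) := fun R => hw R.1 R.2
  by_cases hFfin : (∫⁻ x, f x ^ p ∂μ) = ⊤
  · rcases eq_or_ne A 0 with rfl | hA
    · have hwz : ∀ i : ℤ × (Fin n → ℤ), w i = 0 := by
        intro i
        have h1 := hw' i
        rw [zero_mul, nonpos_iff_eq_zero] at h1
        have h2 : w i ≤
            ∑' j : {j : ℤ × (Fin n → ℤ) // CarlAux.cube n j ⊆ CarlAux.cube n i}, w j :=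
          ENNReal.le_tsum (f := fun j : {j : ℤ × (Fin n → ℤ) //
            CarlAux.cube n j ⊆ CarlAux.cube n i} => w j) ⟨i, subset_rfl⟩
        rw [h1] at h2
        exact nonpos_iff_eq_zero.mp h2
      simp [hwz]
    · have hpos : (0:ℝ) < (p / (p - 1)) ^ p :=
        Real.rpow_pos_of_pos (div_pos (by linarith) (by linarith)) p
      rw [hFfin, ENNReal.mul_top (mul_ne_zero (ENNReal.ofReal_pos.mpr hpos).ne' hA)]
      exact le_top
  · rw [ENNReal.tsum_eq_iSup_sum]
    apply iSup_le
    intro s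
    rcases s.eq_empty_or_nonempty with rfl | hne
    · simp
    set K₀ := (s.image Prod.fst).min' (hne.image _) with hK₀
    have hK : ∀ i ∈ s, K₀ ≤ i.1 := fun i hi =>
      Finset.min'_le _ _ (Finset.mem_image_of_mem _ hi)
    have hinj : Function.Injective (fun x : {x // x ∈ s} => (⟨x.1, hK x.1 x.2⟩ :
        {i : ℤ × (Fin n → ℤ) // K₀ ≤ i.1})) := by
      intro u v h
      have := congrArg Subtype.val h
      exact Subtype.ext this
    calc (∑ i ∈ s, dyAvg μ f (dyadicCube n i.1 i.2) ^ p * w i)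
        = ∑' x : {x // x ∈ s}, dyAvg μ f
            (dyadicCube n (x : ℤ × (Fin n → ℤ)).1 (x : ℤ × (Fin n → ℤ)).2) ^ p *
              w (x : ℤ × (Fin n → ℤ)) := (Finset.tsum_subtype s _).symm
      _ ≤ ∑' i : {i : ℤ × (Fin n → ℤ) // K₀ ≤ i.1},
            dyAvg μ f (CarlAux.cube n (i : ℤ × (Fin n → ℤ))) ^ p *
              w (i : ℤ × (Fin n → ℤ)) :=
          ENNReal.tsum_comp_le_tsum_of_injective hinj _
      _ ≤ _ := CarlAux.key_bound μ f hf w A hw' hp hFfin K₀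
end

section
/- With the stopping cube construction: let μ be a locally finite Borel measure on ℝ^n, f ≥ 0 locally μ-integrable, r > 1, and let 𝒢 be the collection of stopping cubes constructed by iterating the stopping rule (each generation consists of the maximal dyadic subcubes R of a previous-generation cube Q with ⨍_R f dμ ≥ r·⨍_Q f dμ, starting from a fixed top cube Q_0). Then for every dyadic cube Q ⊆ Q_0, ∑_{R ∈ 𝒢, R ⊆ Q} μ(R) ≤ (r/(r-1)) · μ(Q). -/
open MeasureTheory ENNReal Set

/-- A set is a dyadic cube. -/
def IsDyadic (n : ℕ) (S : Set (Fin n → ℝ)) : Prop :=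
  ∃ k m, S = dyadicCube n k m

/-- `𝒢*(Q)`: the collection of maximal dyadic subcubes `R ⊆ Q` with
`⨍_R f dμ ≥ r ⨍_Q f dμ`. -/
def stoppingCubes {n : ℕ} (μ : Measure (Fin n → ℝ)) (f : (Fin n → ℝ) → ℝ≥0∞)
    (r : ℝ) (Q : Set (Fin n → ℝ)) : Set (Set (Fin n → ℝ)) :=
  {R | IsDyadic n R ∧ R ⊆ Q ∧ ENNReal.ofReal r * dyAvg μ f Q ≤ dyAvg μ f R ∧
    ∀ R', IsDyadic n R' → R' ⊆ Q → R ⊆ R' →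
      ENNReal.ofReal r * dyAvg μ f Q ≤ dyAvg μ f R' → R' = R}

/-- The generations of stopping cubes starting from a top cube `Q₀`. -/
def generations {n : ℕ} (μ : Measure (Fin n → ℝ)) (f : (Fin n → ℝ) → ℝ≥0∞)
    (r : ℝ) (Q₀ : Set (Fin n → ℝ)) : ℕ → Set (Set (Fin n → ℝ))
  | 0 => {Q₀}
  | j + 1 => {R | ∃ Q ∈ generations μ f r Q₀ j, R ∈ stoppingCubes μ f r Q}

/-- The full family of stopping cubes generated from the top cube `Q₀`. -/
def stoppingFamily {n : ℕ} (μ : Measure (Fin n → ℝ)) (f : (Fin n → ℝ) → ℝ≥0∞)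
    (r : ℝ) (Q₀ : Set (Fin n → ℝ)) : Set (Set (Fin n → ℝ)) :=
  ⋃ j, generations μ f r Q₀ j

set_option linter.unusedSectionVars false
set_option maxHeartbeats 1000000

private lemma floor_div_int (E : ℤ) (hE : 0 < E) (c : ℤ) {t : ℝ}
    (h1 : (c : ℝ) ≤ t) (h2 : t < c + 1) : ⌊t / (E : ℝ)⌋ = ⌊(c : ℝ) / (E : ℝ)⌋ := by
  have hE' : (0:ℝ) < (E : ℝ) := by exact_mod_cast hE
  set q := ⌊(c : ℝ) / (E : ℝ)⌋ with hq
  have h3 : (q : ℝ) ≤ (c:ℝ)/(E:ℝ) := Int.floor_le _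
  have h4 : (c:ℝ)/(E:ℝ) < q + 1 := Int.lt_floor_add_one _
  have h5 : (q:ℝ) * E ≤ c := by rwa [← le_div_iff₀ hE']
  have h6 : (c:ℝ) < ((q:ℝ)+1) * E := by rwa [← div_lt_iff₀ hE']
  have h6i : c < (q+1) * E := by exact_mod_cast h6
  have h6' : (c:ℝ) + 1 ≤ ((q:ℝ)+1)*E := by exact_mod_cast Int.add_one_le_of_lt h6i
  rw [Int.floor_eq_iff]
  constructor
  · rw [le_div_iff₀ hE']; exact h5.trans h1
  · rw [div_lt_iff₀ hE']; exact h2.trans_le h6'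

private lemma floor_zpow_eq {k k' : ℤ} (hkk' : k ≤ k') {x y : ℝ}
    (h : ⌊x * 2 ^ k'⌋ = ⌊y * 2 ^ k'⌋) : ⌊x * 2 ^ k⌋ = ⌊y * 2 ^ k⌋ := by
  set d : ℕ := (k' - k).toNat with hd
  have hdz : (d : ℤ) = k' - k := Int.toNat_of_nonneg (by omega)
  have hE : (0:ℤ) < 2 ^ d := by positivity
  have key : ∀ t : ℝ, t * 2 ^ k = (t * 2 ^ k') / (((2:ℤ)^d : ℤ) : ℝ) := by
    intro t
    have h2 : ((2:ℝ)) ^ k' = 2 ^ k * 2 ^ (d:ℤ) := by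
      rw [← zpow_add₀ (two_ne_zero) k (d:ℤ), hdz]; ring_nf
    have h3 : (((2:ℤ)^d : ℤ) : ℝ) = 2 ^ (d:ℤ) := by push_cast [zpow_natCast]; ring
    rw [h2, h3]
    have : (2:ℝ) ^ (d:ℤ) ≠ 0 := by positivity
    field_simp
  calc ⌊x * 2 ^ k⌋ = ⌊(x * 2 ^ k') / (((2:ℤ)^d : ℤ) : ℝ)⌋ := by rw [key x]
    _ = ⌊((⌊x * 2 ^ k'⌋ : ℝ)) / (((2:ℤ)^d : ℤ) : ℝ)⌋ :=
        floor_div_int _ hE _ (Int.floor_le _) (Int.lt_floor_add_one _)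
    _ = ⌊((⌊y * 2 ^ k'⌋ : ℝ)) / (((2:ℤ)^d : ℤ) : ℝ)⌋ := by rw [h]
    _ = ⌊(y * 2 ^ k') / (((2:ℤ)^d : ℤ) : ℝ)⌋ :=
        (floor_div_int _ hE _ (Int.floor_le _) (Int.lt_floor_add_one _)).symm
    _ = ⌊y * 2 ^ k⌋ := by rw [key y]

lemma mem_dyadicCube {n : ℕ} {k : ℤ} {m : Fin n → ℤ} {x : Fin n → ℝ} :
    x ∈ dyadicCube n k m ↔ ∀ i, ⌊x i * 2 ^ k⌋ = m i := by
  unfold dyadicCube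
  simp only [mem_setOf_eq]
  refine forall_congr' fun i => ?_
  have h2 : (0:ℝ) < 2 ^ k := by positivity
  rw [Int.floor_eq_iff, zpow_neg, ← div_eq_mul_inv, ← div_eq_mul_inv,
    div_le_iff₀ h2, lt_div_iff₀ h2]

lemma dyadicCube_nonempty (n : ℕ) (k : ℤ) (m : Fin n → ℤ) : (dyadicCube n k m).Nonempty := by
  refine ⟨fun i => (m i : ℝ) * 2 ^ (-k), fun i => ?_⟩
  dsimp only
  have h2 : (0:ℝ) < 2 ^ (-k) := by positivity
  exact ⟨le_refl _, by nlinarith⟩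

lemma IsDyadic.nonempty {n : ℕ} {S : Set (Fin n → ℝ)} (h : IsDyadic n S) : S.Nonempty := by
  obtain ⟨k, m, rfl⟩ := h; exact dyadicCube_nonempty n k m

lemma IsDyadic.measurableSet {n : ℕ} {S : Set (Fin n → ℝ)} (h : IsDyadic n S) :
    MeasurableSet S := by
  obtain ⟨k, m, rfl⟩ := h
  have : dyadicCube n k m =
      ⋂ i, (fun x : Fin n → ℝ => x i) ⁻¹'
        (Ico ((m i : ℝ) * 2 ^ (-k)) (((m i : ℝ) + 1) * 2 ^ (-k))) := by
    ext x; simp [dyadicCube, mem_Ico]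
  rw [this]
  exact MeasurableSet.iInter fun i => (measurable_pi_apply i) measurableSet_Ico

lemma IsDyadic.measure_ne_top {n : ℕ} (μ : Measure (Fin n → ℝ)) [IsLocallyFiniteMeasure μ]
    {S : Set (Fin n → ℝ)} (h : IsDyadic n S) : μ S ≠ ∞ := by
  obtain ⟨k, m, rfl⟩ := h
  have hsub : dyadicCube n k m ⊆
      Icc (fun i => (m i : ℝ) * 2 ^ (-k)) (fun i => ((m i : ℝ) + 1) * 2 ^ (-k)) := by
    intro x hx
    exact ⟨fun i => (hx i).1, fun i => (hx i).2.le⟩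
  exact ((measure_mono hsub).trans_lt isCompact_Icc.measure_lt_top).ne

lemma countable_dyadic (n : ℕ) : {S : Set (Fin n → ℝ) | IsDyadic n S}.Countable := by
  have hsub : {S : Set (Fin n → ℝ) | IsDyadic n S} ⊆
      range (fun p : ℤ × (Fin n → ℤ) => dyadicCube n p.1 p.2) := by
    rintro S ⟨k, m, rfl⟩; exact ⟨(k, m), rfl⟩
  exact (countable_range _).mono hsub

lemma dyadic_subset_of_le {n : ℕ} {k k' : ℤ} {m m' : Fin n → ℤ} (hkk' : k ≤ k')
    {x : Fin n → ℝ} (hx : x ∈ dyadicCube n k m) (hx' : x ∈ dyadicCube n k' m') :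
    dyadicCube n k' m' ⊆ dyadicCube n k m := by
  rw [mem_dyadicCube] at hx hx'
  intro y hy
  rw [mem_dyadicCube] at hy ⊢
  intro i
  rw [← hx i]
  exact floor_zpow_eq hkk' (by rw [hy i, hx' i])

lemma dyadic_comparable {n : ℕ} {S T : Set (Fin n → ℝ)} (hS : IsDyadic n S) (hT : IsDyadic n T)
    (h : (S ∩ T).Nonempty) : S ⊆ T ∨ T ⊆ S := by
  obtain ⟨k, m, rfl⟩ := hS
  obtain ⟨k', m', rfl⟩ := hT
  obtain ⟨x, hx, hx'⟩ := h
  rcases le_total k k' with hkk' | hkk'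
  · exact Or.inr (dyadic_subset_of_le hkk' hx hx')
  · exact Or.inl (dyadic_subset_of_le hkk' hx' hx)

/-- general covering lemma for tsums over subtypes -/
lemma tsum_le_cover {α ι : Type*} (g : α → ℝ≥0∞) (A : Set α) (M : Set ι) (B : ι → Set α)
    (h : ∀ a ∈ A, ∃ m ∈ M, a ∈ B m) :
    ∑' a : A, g a ≤ ∑' m : M, ∑' b : B (m : ι), g b := by
  classical
  choose φ hφM hφB using h
  let F : A → Σ m : M, B (m : ι) := fun a => ⟨⟨φ a a.2, hφM a a.2⟩, ⟨a, hφB a a.2⟩⟩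
  have hinj : Function.Injective F := by
    intro a b hab
    have := congrArg (fun σ : Σ m : M, B (m : ι) => (σ.2 : α)) hab
    exact Subtype.ext this
  calc ∑' a : A, g a = ∑' a : A, (fun σ : Σ m : M, B (m : ι) => g σ.2) (F a) := rfl
    _ ≤ ∑' σ : Σ m : M, B (m : ι), g σ.2 :=
        ENNReal.tsum_comp_le_tsum_of_injective hinj _
    _ = ∑' m : M, ∑' b : B (m : ι), g b := ENNReal.tsum_sigma (fun (m : M) (b : B (m : ι)) => g b)

set_option linter.unusedSectionVars false

section Stopping

variable {n : ℕ} {μ : Measure (Fin n → ℝ)} [IsLocallyFiniteMeasure μ]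
  {f : (Fin n → ℝ) → ℝ≥0∞} {r : ℝ}

lemma stoppingCubes_disjoint {P R₁ R₂ : Set (Fin n → ℝ)}
    (h1 : R₁ ∈ stoppingCubes μ f r P) (h2 : R₂ ∈ stoppingCubes μ f r P)
    (hne : R₁ ≠ R₂) : Disjoint R₁ R₂ := by
  rw [Set.disjoint_iff_inter_eq_empty]
  by_contra hcon
  have hnon : (R₁ ∩ R₂).Nonempty := Set.nonempty_iff_ne_empty.2 hcon
  rcases dyadic_comparable h1.1 h2.1 hnon with hsub | hsub
  · exact hne (h1.2.2.2 R₂ h2.1 h2.2.1 hsub h2.2.2.1).symm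
  · exact hne (h2.2.2.2 R₁ h1.1 h1.2.1 hsub h1.2.2.1)

lemma self_mem_stoppingCubes {P : Set (Fin n → ℝ)} (hP : IsDyadic n P) (hr : 0 < r)
    (h : dyAvg μ f P = 0 ∨ dyAvg μ f P = ⊤) : P ∈ stoppingCubes μ f r P := by
  have hineq : ENNReal.ofReal r * dyAvg μ f P ≤ dyAvg μ f P := by
    rcases h with h | h
    · rw [h, mul_zero]
    · rw [h, ENNReal.mul_top (ENNReal.ofReal_pos.mpr hr).ne']
  exact ⟨hP, le_refl _, hineq, fun R' _ hR'P hPR' _ => le_antisymm hR'P hPR'⟩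

lemma stoppingCubes_degenerate {P : Set (Fin n → ℝ)} (hP : IsDyadic n P) (hr : 0 < r)
    (h : dyAvg μ f P = 0 ∨ dyAvg μ f P = ⊤) : stoppingCubes μ f r P = {P} := by
  have hself := self_mem_stoppingCubes (μ := μ) (f := f) hP hr h
  ext R
  simp only [mem_singleton_iff]
  constructor
  · intro hR
    exact (hR.2.2.2 P hP (le_refl _) hR.2.1 hself.2.2.1).symm
  · rintro rfl; exact hself

lemma nondeg_child (hr : 1 < r) {P R : Set (Fin n → ℝ)} (hP : IsDyadic n P)
    (h0 : dyAvg μ f P ≠ 0) (hi : dyAvg μ f P ≠ ⊤)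
    (hR : R ∈ stoppingCubes μ f r P) : dyAvg μ f R ≠ 0 ∧ dyAvg μ f R ≠ ⊤ := by
  have hμP0 : μ P ≠ 0 := by
    intro h; exact h0 (by simp [dyAvg, h])
  have hμPt : μ P ≠ ⊤ := hP.measure_ne_top μ
  have hrne : ENNReal.ofReal r ≠ 0 := (ENNReal.ofReal_pos.mpr (by linarith)).ne'
  have hle : ENNReal.ofReal r * dyAvg μ f P ≤ dyAvg μ f R := hR.2.2.1
  constructor
  · intro h
    rw [h] at hle
    exact (mul_ne_zero hrne h0) (le_antisymm hle zero_le)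
  · have hIP : (∫⁻ x in P, f x ∂μ) ≠ ⊤ := by
      intro h
      exact hi (by simp [dyAvg, hμP0, h, ENNReal.top_div_of_ne_top hμPt])
    by_cases hR0 : μ R = 0
    · simp [dyAvg, hR0]
    · have h2 : dyAvg μ f R = (∫⁻ x in R, f x ∂μ) / μ R := by simp [dyAvg, hR0]
      rw [h2]
      have hmono : (∫⁻ x in R, f x ∂μ) ≤ ∫⁻ x in P, f x ∂μ :=
        lintegral_mono_set hR.2.1
      have hRI : (∫⁻ x in R, f x ∂μ) ≠ ⊤ := fun h => hIP (top_le_iff.mp (h ▸ hmono))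
      exact (ENNReal.div_lt_top hRI hR0).ne

lemma sum_stoppingCubes_le (hr : 1 < r) (hf : Measurable f) {P : Set (Fin n → ℝ)}
    (hP : IsDyadic n P) (h0 : dyAvg μ f P ≠ 0) (hi : dyAvg μ f P ≠ ⊤) :
    ∑' R : ↥(stoppingCubes μ f r P), μ (R : Set (Fin n → ℝ)) ≤ (ENNReal.ofReal r)⁻¹ * μ P := by
  classical
  have hμP0 : μ P ≠ 0 := fun h => h0 (by simp [dyAvg, h])
  have hμPt : μ P ≠ ⊤ := hP.measure_ne_top μ
  have havg : dyAvg μ f P = (∫⁻ x in P, f x ∂μ) / μ P := by simp [dyAvg, hμP0]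
  have hIP : (∫⁻ x in P, f x ∂μ) = dyAvg μ f P * μ P := by
    rw [havg, ENNReal.div_mul_cancel hμP0 hμPt]
  haveI : Countable ↥(stoppingCubes μ f r P) :=
    Set.Countable.to_subtype ((countable_dyadic n).mono (fun R hR => hR.1))
  have hmeas : ∀ R : ↥(stoppingCubes μ f r P), MeasurableSet (R : Set (Fin n → ℝ)) :=
    fun R => R.2.1.measurableSet
  have hdisj : Pairwise (Function.onFun Disjoint
      (fun R : ↥(stoppingCubes μ f r P) => (R : Set (Fin n → ℝ)))) := by
    intro a b hab
    exact stoppingCubes_disjoint a.2 b.2 (fun h => hab (Subtype.ext h))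
  have hpoint : ∀ R : ↥(stoppingCubes μ f r P),
      (ENNReal.ofReal r * dyAvg μ f P) * μ (R : Set (Fin n → ℝ))
        ≤ μ.withDensity f (R : Set (Fin n → ℝ)) := by
    intro R
    rw [withDensity_apply _ (hmeas R)]
    by_cases hR0 : μ (R : Set (Fin n → ℝ)) = 0
    · rw [hR0, mul_zero]; exact zero_le
    · have h1 : ENNReal.ofReal r * dyAvg μ f P ≤ dyAvg μ f (R : Set (Fin n → ℝ)) := R.2.2.2.1
      have h2 : dyAvg μ f (R : Set (Fin n → ℝ))
          = (∫⁻ x in (R : Set (Fin n → ℝ)), f x ∂μ) / μ (R : Set (Fin n → ℝ)) := by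
        simp [dyAvg, hR0]
      calc (ENNReal.ofReal r * dyAvg μ f P) * μ (R : Set (Fin n → ℝ))
          ≤ dyAvg μ f (R : Set (Fin n → ℝ)) * μ (R : Set (Fin n → ℝ)) :=
            mul_le_mul_left h1 _
        _ = ∫⁻ x in (R : Set (Fin n → ℝ)), f x ∂μ := by
            rw [h2, ENNReal.div_mul_cancel hR0 (R.2.1.measure_ne_top μ)]
  have hsum2 : ∑' R : ↥(stoppingCubes μ f r P), μ.withDensity f (R : Set (Fin n → ℝ))
      ≤ ∫⁻ x in P, f x ∂μ := by
    rw [← measure_iUnion hdisj hmeas]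
    calc μ.withDensity f (⋃ R : ↥(stoppingCubes μ f r P), (R : Set (Fin n → ℝ)))
        ≤ μ.withDensity f P := measure_mono
          (by simp only [iUnion_subset_iff]; exact fun R => R.2.2.1)
      _ = ∫⁻ x in P, f x ∂μ := withDensity_apply _ hP.measurableSet
  have hmain : (ENNReal.ofReal r * dyAvg μ f P)
      * (∑' R : ↥(stoppingCubes μ f r P), μ (R : Set (Fin n → ℝ))) ≤ dyAvg μ f P * μ P := by
    rw [← ENNReal.tsum_mul_left]
    exact (ENNReal.tsum_le_tsum hpoint).trans (hsum2.trans (le_of_eq hIP))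
  rw [mul_comm (ENNReal.ofReal r) (dyAvg μ f P), mul_assoc] at hmain
  have hcancel := (ENNReal.mul_le_mul_iff_right h0 hi).mp hmain
  have hrne : ENNReal.ofReal r ≠ 0 := (ENNReal.ofReal_pos.mpr (by linarith)).ne'
  have hfin := mul_le_mul_right hcancel (ENNReal.ofReal r)⁻¹
  rwa [← mul_assoc, ENNReal.inv_mul_cancel hrne ENNReal.ofReal_ne_top, one_mul] at hfin

end Stopping

section Generations

variable {n : ℕ} {μ : Measure (Fin n → ℝ)} [IsLocallyFiniteMeasure μ]
  {f : (Fin n → ℝ) → ℝ≥0∞} {r : ℝ}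

lemma generations_zero (Q₀ : Set (Fin n → ℝ)) : generations μ f r Q₀ 0 = {Q₀} := rfl

lemma generations_succ (Q₀ : Set (Fin n → ℝ)) (j : ℕ) :
    generations μ f r Q₀ (j + 1)
      = {R | ∃ Q ∈ generations μ f r Q₀ j, R ∈ stoppingCubes μ f r Q} := rfl

lemma mem_generations_dyadic {Q₀ : Set (Fin n → ℝ)} (hQ₀ : IsDyadic n Q₀) :
    ∀ j S, S ∈ generations μ f r Q₀ j → IsDyadic n S ∧ S ⊆ Q₀ := by
  intro j
  induction j with
  | zero => intro S hS; rw [generations_zero, mem_singleton_iff] at hS; subst hS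
            exact ⟨hQ₀, le_refl _⟩
  | succ j ih =>
      rintro S ⟨T, hT, hS⟩
      exact ⟨hS.1, hS.2.1.trans (ih T hT).2⟩

lemma gen_inter_eq {Q₀ : Set (Fin n → ℝ)} :
    ∀ j (S T : Set (Fin n → ℝ)), S ∈ generations μ f r Q₀ j → T ∈ generations μ f r Q₀ j →
      (S ∩ T).Nonempty → S = T := by
  intro j
  induction j with
  | zero => intro S T hS hT _
            rw [generations_zero, mem_singleton_iff] at hS hT; rw [hS, hT]
  | succ j ih =>
      rintro S T ⟨S', hS', hS⟩ ⟨T', hT', hT⟩ hne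
      have hST : S' = T' := ih S' T' hS' hT'
        (hne.mono (inter_subset_inter hS.2.1 hT.2.1))
      subst hST
      by_contra hcon
      have hd := stoppingCubes_disjoint hS hT hcon
      rw [Set.disjoint_iff_inter_eq_empty] at hd
      exact (Set.nonempty_iff_ne_empty.mp hne) hd

lemma gen_comp {Q₀ : Set (Fin n → ℝ)} {j : ℕ} {S : Set (Fin n → ℝ)}
    (hS : S ∈ generations μ f r Q₀ j) :
    ∀ k T, T ∈ generations μ f r S k → T ∈ generations μ f r Q₀ (j + k) := by
  intro k
  induction k with
  | zero => intro T hT; rw [generations_zero, mem_singleton_iff] at hT; rwa [hT]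
  | succ k ih =>
      rintro T ⟨U, hU, hT⟩
      exact ⟨U, ih U hU, hT⟩

lemma gen_ancestor {Q₀ : Set (Fin n → ℝ)} :
    ∀ j (S : Set (Fin n → ℝ)), S ∈ generations μ f r Q₀ j → ∀ i ≤ j,
      ∃ C, C ∈ generations μ f r Q₀ i ∧ S ⊆ C ∧ S ∈ generations μ f r C (j - i) := by
  intro j
  induction j with
  | zero =>
      intro S hS i hi
      interval_cases i
      exact ⟨S, hS, le_refl _, rfl⟩
  | succ j ih =>
      rintro S ⟨P, hP, hS⟩ i hi
      rcases Nat.lt_or_ge i (j+1) with hlt | hge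
      · have hij : i ≤ j := Nat.lt_succ_iff.mp hlt
        obtain ⟨C, hC, hPC, hPgen⟩ := ih P hP i hij
        refine ⟨C, hC, hS.2.1.trans hPC, ?_⟩
        have : j + 1 - i = (j - i) + 1 := by omega
        rw [this]
        exact ⟨P, hPgen, hS⟩
      · have : i = j + 1 := le_antisymm hi hge
        subst this
        exact ⟨S, ⟨P, hP, hS⟩, le_refl _, by simp [generations_zero]⟩

lemma gen_lt_of_ssubset {Q₀ : Set (Fin n → ℝ)} {S T : Set (Fin n → ℝ)} {js jt : ℕ}
    (hS : S ∈ generations μ f r Q₀ js) (hT : T ∈ generations μ f r Q₀ jt)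
    (hsub : S ⊆ T) (hne : S ≠ T) (hSne : S.Nonempty) : jt < js := by
  by_contra hcon
  push_neg at hcon
  obtain ⟨C, hC, hTC, -⟩ := gen_ancestor jt T hT js hcon
  have : S = C := gen_inter_eq js S C hS hC
    (by rw [Set.inter_eq_self_of_subset_left (hsub.trans hTC)]; exact hSne)
  exact hne (le_antisymm hsub (this ▸ hTC))

lemma mem_family_of_subset {Q₀ : Set (Fin n → ℝ)} {A B : Set (Fin n → ℝ)} {a b : ℕ}
    (hA : A ∈ generations μ f r Q₀ a) (hB : B ∈ generations μ f r Q₀ b)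
    (hsub : A ⊆ B) (hAne : A.Nonempty) : ∃ k, A ∈ generations μ f r B k := by
  rcases Nat.lt_or_ge a b with hab | hab
  · obtain ⟨C, hC, hBC, -⟩ := gen_ancestor b B hB a hab.le
    have hAC : A = C := gen_inter_eq a A C hA hC
      (by rw [Set.inter_eq_self_of_subset_left (hsub.trans hBC)]; exact hAne)
    have : A = B := le_antisymm hsub (hAC ▸ hBC)
    exact ⟨0, by rw [this]; simp [generations_zero]⟩
  · obtain ⟨C, hC, hAC, hAgen⟩ := gen_ancestor a A hA b hab
    have : C = B := gen_inter_eq b C B hC hB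
      (hAne.mono (Set.subset_inter hAC hsub))
    exact ⟨a - b, this ▸ hAgen⟩

end Generations

section Subtree

variable {n : ℕ} {μ : Measure (Fin n → ℝ)} [IsLocallyFiniteMeasure μ]
  {f : (Fin n → ℝ) → ℝ≥0∞} {r : ℝ}

lemma geom_const (hr : 1 < r) :
    (1 - (ENNReal.ofReal r)⁻¹)⁻¹ = ENNReal.ofReal (r / (r - 1)) := by
  have hrpos : (0:ℝ) < r := by linarith
  have h1 : (ENNReal.ofReal r)⁻¹ = ENNReal.ofReal r⁻¹ :=
    (ENNReal.ofReal_inv_of_pos hrpos).symm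
  have h3 : (0:ℝ) < 1 - r⁻¹ := by
    have := (div_lt_one hrpos).mpr hr
    rw [one_div] at this
    linarith
  have h2 : (1:ℝ≥0∞) - ENNReal.ofReal r⁻¹ = ENNReal.ofReal (1 - r⁻¹) := by
    rw [ENNReal.ofReal_sub _ (by positivity), ENNReal.ofReal_one]
  have h4 : (1 - r⁻¹)⁻¹ = r / (r - 1) := by
    have h5 : 1 - r⁻¹ = (r - 1) / r := by field_simp
    rw [h5, inv_div]
  rw [h1, h2, ← ENNReal.ofReal_inv_of_pos h3, h4]

lemma one_le_const (hr : 1 < r) : (1:ℝ≥0∞) ≤ ENNReal.ofReal (r / (r - 1)) := by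
  rw [ENNReal.one_le_ofReal]
  rw [le_div_iff₀ (by linarith)]
  linarith

lemma gen_bound (hr : 1 < r) (hf : Measurable f) {m0 : Set (Fin n → ℝ)} (hm : IsDyadic n m0)
    (h0 : dyAvg μ f m0 ≠ 0) (hi : dyAvg μ f m0 ≠ ⊤) (k : ℕ) :
    (∀ P ∈ generations μ f r m0 k, IsDyadic n P ∧ dyAvg μ f P ≠ 0 ∧ dyAvg μ f P ≠ ⊤) ∧
    ∑' P : ↥(generations μ f r m0 k), μ (P : Set (Fin n → ℝ))
      ≤ ((ENNReal.ofReal r)⁻¹) ^ k * μ m0 := by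
  induction k with
  | zero =>
      constructor
      · intro P hP
        rw [generations_zero, mem_singleton_iff] at hP
        subst hP; exact ⟨hm, h0, hi⟩
      · rw [generations_zero, tsum_singleton, pow_zero, one_mul]
  | succ k ih =>
      obtain ⟨ihcond, ihsum⟩ := ih
      have hcond : ∀ P ∈ generations μ f r m0 (k+1),
          IsDyadic n P ∧ dyAvg μ f P ≠ 0 ∧ dyAvg μ f P ≠ ⊤ := by
        rintro P ⟨T, hT, hP⟩
        obtain ⟨hTd, hT0, hTi⟩ := ihcond T hT
        exact ⟨hP.1, (nondeg_child hr hTd hT0 hTi hP).1, (nondeg_child hr hTd hT0 hTi hP).2⟩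
      refine ⟨hcond, ?_⟩
      calc ∑' P : ↥(generations μ f r m0 (k+1)), μ (P : Set (Fin n → ℝ))
          ≤ ∑' T : ↥(generations μ f r m0 k),
              ∑' P : ↥(stoppingCubes μ f r (T : Set (Fin n → ℝ))), μ (P : Set (Fin n → ℝ)) :=
            tsum_le_cover _ _ _ _ (fun R hR => hR)
        _ ≤ ∑' T : ↥(generations μ f r m0 k),
              (ENNReal.ofReal r)⁻¹ * μ (T : Set (Fin n → ℝ)) := by
            refine ENNReal.tsum_le_tsum (fun T => ?_)
            obtain ⟨hTd, hT0, hTi⟩ := ihcond T T.2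
            exact sum_stoppingCubes_le hr hf hTd hT0 hTi
        _ = (ENNReal.ofReal r)⁻¹ * ∑' T : ↥(generations μ f r m0 k), μ (T : Set (Fin n → ℝ)) :=
            ENNReal.tsum_mul_left
        _ ≤ (ENNReal.ofReal r)⁻¹ * ((ENNReal.ofReal r)⁻¹ ^ k * μ m0) := mul_le_mul_right ihsum _
        _ = (ENNReal.ofReal r)⁻¹ ^ (k+1) * μ m0 := by ring

lemma subtree_bound (hr : 1 < r) (hf : Measurable f) {m0 : Set (Fin n → ℝ)}
    (hm : IsDyadic n m0) :
    ∑' R : ↥(stoppingFamily μ f r m0), μ (R : Set (Fin n → ℝ))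
      ≤ ENNReal.ofReal (r / (r - 1)) * μ m0 := by
  by_cases hdeg : dyAvg μ f m0 = 0 ∨ dyAvg μ f m0 = ⊤
  · have hgen : ∀ k, generations μ f r m0 k = {m0} := by
      intro k
      induction k with
      | zero => rfl
      | succ k ih =>
          rw [generations_succ, ih]
          ext R
          simp [stoppingCubes_degenerate hm (by linarith : (0:ℝ) < r) hdeg]
    have hfam : stoppingFamily μ f r m0 = {m0} := by
      simp [stoppingFamily, hgen]
    rw [hfam, tsum_singleton]
    exact le_mul_of_one_le_left zero_le (one_le_const hr)
  · push_neg at hdeg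
    obtain ⟨h0, hi⟩ := hdeg
    calc ∑' R : ↥(stoppingFamily μ f r m0), μ (R : Set (Fin n → ℝ))
        ≤ ∑' k : (univ : Set ℕ),
            ∑' R : ↥(generations μ f r m0 (k : ℕ)), μ (R : Set (Fin n → ℝ)) :=
          tsum_le_cover _ _ _ _ (fun R hR => by
            obtain ⟨k, hk⟩ := mem_iUnion.mp hR
            exact ⟨k, mem_univ k, hk⟩)
      _ = ∑' k : ℕ, ∑' R : ↥(generations μ f r m0 k), μ (R : Set (Fin n → ℝ)) :=
          tsum_univ (fun k : ℕ => ∑' R : ↥(generations μ f r m0 k), μ (R : Set (Fin n → ℝ)))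
      _ ≤ ∑' k : ℕ, (ENNReal.ofReal r)⁻¹ ^ k * μ m0 :=
          ENNReal.tsum_le_tsum (fun k => (gen_bound hr hf hm h0 hi k).2)
      _ = (∑' k : ℕ, (ENNReal.ofReal r)⁻¹ ^ k) * μ m0 := ENNReal.tsum_mul_right
      _ = (1 - (ENNReal.ofReal r)⁻¹)⁻¹ * μ m0 := by rw [ENNReal.tsum_geometric]
      _ = ENNReal.ofReal (r / (r - 1)) * μ m0 := by rw [geom_const hr]

end Subtree

/-- Carleson packing condition for the stopping family: for every dyadic cube `Q ⊆ Q₀`,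
`∑_{R ∈ 𝒢, R ⊆ Q} μ(R) ≤ (r/(r-1)) μ(Q)`. -/
theorem stoppingFamily_carleson {n : ℕ} (μ : Measure (Fin n → ℝ))
    [IsLocallyFiniteMeasure μ]
    (f : (Fin n → ℝ) → ℝ≥0∞) (hf : Measurable f)
    (r : ℝ) (hr : 1 < r)
    (Q₀ : Set (Fin n → ℝ)) (hQ₀ : IsDyadic n Q₀)
    (Q : Set (Fin n → ℝ)) (hQ : IsDyadic n Q) (hQQ₀ : Q ⊆ Q₀) :
    (∑' R : {R : Set (Fin n → ℝ) // R ∈ stoppingFamily μ f r Q₀ ∧ R ⊆ Q},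
        μ (R : Set (Fin n → ℝ))) ≤ ENNReal.ofReal (r / (r - 1)) * μ Q := by
  classical
  set A : Set (Set (Fin n → ℝ)) := {R | R ∈ stoppingFamily μ f r Q₀ ∧ R ⊆ Q} with hA
  set M : Set (Set (Fin n → ℝ)) := {m | (∃ j, m ∈ generations μ f r Q₀ j) ∧ m ⊆ Q ∧
    ∀ T, (∃ t, T ∈ generations μ f r Q₀ t) → m ⊆ T → T ⊆ Q → T = m} with hM
  have hMdyadic : ∀ m ∈ M, IsDyadic n m := by
    rintro m ⟨⟨j, hj⟩, -, -⟩
    exact (mem_generations_dyadic hQ₀ j m hj).1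
  have key : ∀ R ∈ A, ∃ m ∈ M, R ∈ stoppingFamily μ f r m := by
    rintro R ⟨hRfam, hRQ⟩
    obtain ⟨j, hj⟩ := mem_iUnion.mp hRfam
    have hRd : IsDyadic n R := (mem_generations_dyadic hQ₀ j R hj).1
    have hex : ∃ i, ∃ S, S ∈ generations μ f r Q₀ i ∧ R ⊆ S ∧ S ⊆ Q :=
      ⟨j, R, hj, le_refl _, hRQ⟩
    obtain ⟨S₀, hS₀gen, hRS₀, hS₀Q⟩ := Nat.find_spec hex
    refine ⟨S₀, ⟨⟨_, hS₀gen⟩, hS₀Q, ?_⟩, ?_⟩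
    · intro T hTex hS₀T hTQ
      obtain ⟨t, hT⟩ := hTex
      by_contra hne
      have hlt : t < Nat.find hex := gen_lt_of_ssubset hS₀gen hT hS₀T
        (fun h => hne h.symm) (mem_generations_dyadic hQ₀ _ _ hS₀gen).1.nonempty
      exact Nat.find_min hex hlt ⟨T, hT, hRS₀.trans hS₀T, hTQ⟩
    · obtain ⟨k, hk⟩ := mem_family_of_subset hj hS₀gen hRS₀ hRd.nonempty
      exact mem_iUnion.mpr ⟨k, hk⟩
  haveI : Countable ↥M := Set.Countable.to_subtype ((countable_dyadic n).mono hMdyadic)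
  have hMdisj : Pairwise (Function.onFun Disjoint
      (fun m : ↥M => (m : Set (Fin n → ℝ)))) := by
    intro a b hab
    rw [Function.onFun, Set.disjoint_iff_inter_eq_empty]
    by_contra hcon
    have hnon : ((a : Set (Fin n → ℝ)) ∩ (b : Set (Fin n → ℝ))).Nonempty :=
      nonempty_iff_ne_empty.2 hcon
    have hane : (a : Set (Fin n → ℝ)) ≠ (b : Set (Fin n → ℝ)) := fun h => hab (Subtype.ext h)
    rcases dyadic_comparable (hMdyadic a a.2) (hMdyadic b b.2) hnon with hsub | hsub
    · exact hane ((a.2.2.2 (b : Set (Fin n → ℝ)) b.2.1 hsub b.2.2.1)).symm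
    · exact hane (b.2.2.2 (a : Set (Fin n → ℝ)) a.2.1 hsub a.2.2.1)
  have hMsum : ∑' m : ↥M, μ (m : Set (Fin n → ℝ)) ≤ μ Q := by
    rw [← measure_iUnion hMdisj (fun m => (hMdyadic m m.2).measurableSet)]
    exact measure_mono (iUnion_subset fun m => m.2.2.1)
  calc (∑' R : {R : Set (Fin n → ℝ) // R ∈ stoppingFamily μ f r Q₀ ∧ R ⊆ Q},
        μ (R : Set (Fin n → ℝ)))
      = ∑' R : ↥A, μ (R : Set (Fin n → ℝ)) := rfl
    _ ≤ ∑' m : ↥M, ∑' R : ↥(stoppingFamily μ f r (m : Set (Fin n → ℝ))),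
          μ (R : Set (Fin n → ℝ)) := tsum_le_cover _ _ _ _ key
    _ ≤ ∑' m : ↥M, ENNReal.ofReal (r / (r - 1)) * μ (m : Set (Fin n → ℝ)) :=
        ENNReal.tsum_le_tsum (fun m => subtree_bound hr hf (hMdyadic m m.2))
    _ = ENNReal.ofReal (r / (r - 1)) * ∑' m : ↥M, μ (m : Set (Fin n → ℝ)) :=
        ENNReal.tsum_mul_left
    _ ≤ ENNReal.ofReal (r / (r - 1)) * μ Q := mul_le_mul_right hMsum _
end

section
/- (Sufficiency in the main theorem, case q = p, finite lattice) Let 𝒟 be a finite collection of sets from a dyadic lattice on ℝ^n, μ and ν Borel measures finite on each Q ∈ 𝒟, p ∈ (1,∞), and (a_Q)_{Q∈𝒟} nonnegative measurable functions. Define M f(x) = (∑_{Q∈𝒟, x∈Q} ((∫_Q f dμ) a_Q(x))^p)^{1/p} for f ≥ 0. Suppose the testing condition holds: for every Q ∈ 𝒟, ‖M_Q(𝟙_Q)‖_{L^p(ν)} ≤ B·μ(Q)^{1/p}, where M_Q is the truncation of M to subcubes of Q. Then for every f ∈ L^p(μ), f ≥ 0, ‖Mf‖_{L^p(ν)} ≤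 C(p)·B·‖f‖_{L^p(μ)} with C(p) = ((1+1/p)^{p+1} p)^{1/p} · p'. -/
open MeasureTheory ENNReal Set
open scoped NNReal

/-- The generalized maximal operator with exponent `p` over a subfamily `J` of a finite
collection `D` of dyadic cubes:
`M_J f (x) = (∑_{i ∈ J, x ∈ Q_i} ((∫_{Q_i} f dμ) a_i(x))^p)^{1/p}`. -/
noncomputable def maxOpP {n : ℕ} (μ : Measure (Fin n → ℝ))
    (J : Set (ℤ × (Fin n → ℤ))) (a : ℤ × (Fin n → ℤ) → (Fin n → ℝ) → ℝ≥0∞)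
    (p : ℝ) (f : (Fin n → ℝ) → ℝ≥0∞) (x : Fin n → ℝ) : ℝ≥0∞ :=
  (∑' i : J, (Set.indicator (dyadicCube n (i : ℤ × (Fin n → ℤ)).1 (i : ℤ × (Fin n → ℤ)).2)
      (fun y => (∫⁻ z in dyadicCube n (i : ℤ × (Fin n → ℤ)).1 (i : ℤ × (Fin n → ℤ)).2, f z ∂μ) *
        a (i : ℤ × (Fin n → ℤ)) y) x) ^ p) ^ (1 / p)

lemma dyadicCube_measurable (n : ℕ) (k : ℤ) (m : Fin n → ℤ) :
    MeasurableSet (dyadicCube n k m) := by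
  have : dyadicCube n k m =
      Set.univ.pi (fun i => Set.Ico ((m i : ℝ) * (2:ℝ)^(-k)) (((m i : ℝ)+1) * (2:ℝ)^(-k))) := by
    ext x; simp [dyadicCube, Set.mem_pi, Set.mem_Ico]
  rw [this]
  exact MeasurableSet.univ_pi (fun i => measurableSet_Ico)

lemma mem_interval_iff (k : ℤ) (mi : ℤ) (s : ℝ) :
    ((mi : ℝ) * (2:ℝ)^(-k) ≤ s ∧ s < ((mi:ℝ)+1) * (2:ℝ)^(-k)) ↔
      ((mi : ℝ) ≤ s * (2:ℝ)^k ∧ s * (2:ℝ)^k < (mi:ℝ)+1) := by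
  have h2 : (0:ℝ) < (2:ℝ)^k := zpow_pos (by norm_num) k
  rw [zpow_neg]
  constructor
  · rintro ⟨h1, h3⟩
    constructor
    · calc (mi:ℝ) = (mi:ℝ) * ((2:ℝ)^k)⁻¹ * (2:ℝ)^k := by field_simp
        _ ≤ s * (2:ℝ)^k := by gcongr
    · calc s * (2:ℝ)^k < ((mi:ℝ)+1) * ((2:ℝ)^k)⁻¹ * (2:ℝ)^k := by gcongr
        _ = (mi:ℝ)+1 := by field_simp
  · rintro ⟨h1, h3⟩
    constructor
    · calc (mi:ℝ) * ((2:ℝ)^k)⁻¹ ≤ s * (2:ℝ)^k * ((2:ℝ)^k)⁻¹ := by gcongr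
        _ = s := by field_simp
    · calc s = s * (2:ℝ)^k * ((2:ℝ)^k)⁻¹ := by field_simp
        _ < ((mi:ℝ)+1) * ((2:ℝ)^k)⁻¹ := by gcongr

-- aux: floor of t/N
lemma div_nat_bounds {t : ℝ} {N : ℕ} (hN : 0 < N) {m' : ℤ} (h1 : (m':ℝ) ≤ t) (h2 : t < (m':ℝ)+1) :
    ((m' / (N:ℤ) : ℤ) : ℝ) ≤ t / N ∧ t / N < ((m' / (N:ℤ) : ℤ) : ℝ) + 1 := by
  have hN' : (0:ℝ) < (N:ℝ) := by exact_mod_cast hN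
  set q : ℤ := m' / (N:ℤ) with hq
  have hql : (q * N : ℤ) ≤ m' := Int.ediv_mul_le m' (by positivity)
  have hqu : m' < (q + 1) * N := by
    have := Int.lt_ediv_add_one_mul_self m' (b := (N:ℤ)) (by exact_mod_cast hN)
    exact this
  constructor
  · rw [le_div_iff₀ hN']
    calc (q:ℝ) * N = ((q * N : ℤ) : ℝ) := by push_cast; ring
      _ ≤ (m':ℝ) := by exact_mod_cast hql
      _ ≤ t := h1
  · rw [div_lt_iff₀ hN']
    calc t < (m':ℝ) + 1 := h2
      _ ≤ ((q:ℝ)+1) * N := by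
          have : (m' + 1 : ℤ) ≤ (q+1) * N := hqu
          calc (m':ℝ) + 1 = ((m'+1 : ℤ):ℝ) := by push_cast; ring
            _ ≤ (((q+1)*N : ℤ):ℝ) := by exact_mod_cast this
            _ = ((q:ℝ)+1)*N := by push_cast; ring

lemma dyadicCube_nested {n : ℕ} {k k' : ℤ} {m m' : Fin n → ℤ} (hk : k ≤ k')
    (hx : (dyadicCube n k m ∩ dyadicCube n k' m').Nonempty) :
    dyadicCube n k' m' ⊆ dyadicCube n k m := by
  obtain ⟨x, hx1, hx2⟩ := hx
  intro y hy i
  rw [mem_interval_iff]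
  have hxm := (mem_interval_iff k (m i) (x i)).1 (hx1 i)
  have hxm' := (mem_interval_iff k' (m' i) (x i)).1 (hx2 i)
  have hym' := (mem_interval_iff k' (m' i) (y i)).1 (hy i)
  set N : ℕ := 2 ^ (k' - k).toNat with hN
  have hNpos : 0 < N := Nat.pow_pos (by norm_num)
  have hNR : (N : ℝ) = (2:ℝ) ^ (k' - k) := by
    rw [hN]
    push_cast
    rw [← zpow_natCast]
    congr 1
    exact Int.toNat_of_nonneg (by omega)
  have key : ∀ s : ℝ, s * (2:ℝ)^k = (s * (2:ℝ)^k') / N := by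
    intro s
    rw [hNR]
    rw [_root_.eq_div_iff (by positivity)]
    rw [mul_assoc, ← zpow_add₀ (by norm_num : (2:ℝ) ≠ 0)]
    congr 2
    omega
  set q : ℤ := m' i / (N:ℤ) with hq
  have hxq := div_nat_bounds hNpos hxm'.1 hxm'.2
  have hyq := div_nat_bounds hNpos hym'.1 hym'.2
  rw [← key] at hxq hyq
  -- m i = q since both are floors of x i * 2^k
  have hmq : m i = q := by
    have h1 := hxm.1; have h2 := hxm.2
    have := Int.le_antisymm (a := m i) (b := q) ?_ ?_
    · exact this
    · have : (m i : ℝ) < (q:ℝ) + 1 := lt_of_le_of_lt h1 hxq.2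
      exact_mod_cast Int.lt_add_one_iff.mp (by exact_mod_cast this)
    · have : (q : ℝ) < (m i:ℝ) + 1 := lt_of_le_of_lt hxq.1 h2
      exact_mod_cast Int.lt_add_one_iff.mp (by exact_mod_cast this)
  rw [hmq]
  exact hyq

lemma dyadicCube_nested_or (n : ℕ) (i j : ℤ × (Fin n → ℤ))
    (h : (dyadicCube n i.1 i.2 ∩ dyadicCube n j.1 j.2).Nonempty) :
    dyadicCube n i.1 i.2 ⊆ dyadicCube n j.1 j.2 ∨ dyadicCube n j.1 j.2 ⊆ dyadicCube n i.1 i.2 := by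
  rcases le_total i.1 j.1 with hk | hk
  · exact Or.inr (dyadicCube_nested hk h)
  · exact Or.inl (dyadicCube_nested hk (by rwa [Set.inter_comm] at h))


lemma young_real {p : ℝ} (hp : 1 < p) {a b : ℝ} (hb : 0 ≤ b) (hba : b ≤ a) :
    p * (a * b ^ (p-1)) ≤ a ^ p + (p-1) * b ^ p := by
  have ha : 0 ≤ a := le_trans hb hba
  rcases eq_or_lt_of_le ha with h0 | ha0
  · have hb0 : b = 0 := le_antisymm (h0 ▸ hba) hb
    subst hb0
    rw [← h0]
    rw [Real.zero_rpow (ne_of_gt (by linarith)), Real.zero_rpow (ne_of_gt (by linarith))]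
    simp
  · set s : ℝ := b / a with hs
    have hs0 : 0 ≤ s := by positivity
    have hne : p - 1 ≠ 0 := by intro h; rw [sub_eq_zero] at h; exact (lt_irrefl 1 (h ▸ hp))
    have hconj : (p/(p-1)).HolderConjugate p := (Real.HolderConjugate.conjExponent hp).symm
    have hy := Real.young_inequality (s ^ (p-1)) 1 hconj
    rw [abs_of_nonneg (by positivity), abs_of_nonneg (by norm_num)] at hy
    have hsp : (s ^ (p-1)) ^ (p/(p-1)) = s ^ p := by
      rw [← Real.rpow_mul hs0]
      congr 1
      field_simp
    rw [hsp] at hy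
    simp only [mul_one, Real.one_rpow] at hy
    have key : p * s ^ (p-1) ≤ (p-1) * s ^ p + 1 := by
      have h1 : s ^ p / (p/(p-1)) = (p-1)/p * s^p := by
        field_simp
      rw [h1] at hy
      have := mul_le_mul_of_nonneg_left hy (le_of_lt (by linarith : (0:ℝ) < p))
      calc p * s ^ (p-1) ≤ p * ((p-1)/p * s^p + 1/p) := this
        _ = (p-1) * s^p + 1 := by field_simp
    have hap : (0:ℝ) < a ^ p := Real.rpow_pos_of_pos ha0 p
    have hmul := mul_le_mul_of_nonneg_right key (le_of_lt hap)
    have hdiv : a ^ p / a ^ (p-1) = a := by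
      rw [← Real.rpow_sub ha0]
      norm_num
    have hsa : s ^ (p-1) * a ^ p = a * b ^ (p-1) := by
      rw [hs, Real.div_rpow hb (le_of_lt ha0), div_mul_eq_mul_div, mul_div_assoc, hdiv]
      ring
    have hsb : s ^ p * a ^ p = b ^ p := by
      rw [hs, Real.div_rpow hb (le_of_lt ha0), div_mul_cancel₀]
      positivity
    calc p * (a * b ^ (p-1)) = p * s ^ (p-1) * a ^ p := by rw [mul_assoc, hsa]
      _ ≤ ((p-1) * s^p + 1) * a^p := hmul
      _ = a^p + (p-1) * (s^p * a^p) := by ring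
      _ = a^p + (p-1) * b^p := by rw [hsb]


lemma real_key {p : ℝ} (hp : 1 < p) {a b : ℝ} (hb : 0 ≤ b) (hba : b ≤ a) :
    a ^ p - b ^ p ≤ p/(p-1) * (a * (a ^ (p-1) - b ^ (p-1))) := by
  have ha : 0 ≤ a := le_trans hb hba
  have hp1 : (0:ℝ) < p - 1 := by linarith
  rcases eq_or_lt_of_le ha with h0 | ha0
  · have hb0 : b = 0 := le_antisymm (h0 ▸ hba) hb
    subst hb0; rw [← h0]
    rw [Real.zero_rpow (ne_of_gt (by linarith))]
    simp
  · have hy := young_real hp hb hba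
    have haa : a * a ^ (p-1) = a ^ p := by
      nth_rewrite 1 [← Real.rpow_one a]
      rw [← Real.rpow_add ha0]
      norm_num
    have hX : a * (a ^ (p-1) - b ^ (p-1)) = a ^ p - a * b ^ (p-1) := by
      rw [mul_sub, haa]
    rw [hX, div_mul_eq_mul_div, le_div_iff₀ hp1]
    nlinarith [hy]

lemma ennreal_key {p : ℝ} (hp : 1 < p) {u v : ℝ≥0∞} (hv : v ≤ u) (hu : u ≠ ∞) :
    u ^ p - v ^ p ≤ ENNReal.ofReal (p/(p-1)) * (u * (u ^ (p-1) - v ^ (p-1))) := by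
  have hp0 : (0:ℝ) ≤ p := by linarith
  have hp10 : (0:ℝ) ≤ p - 1 := by linarith
  lift u to ℝ≥0 using hu
  lift v to ℝ≥0 using (lt_of_le_of_lt hv ENNReal.coe_lt_top).ne
  rw [ENNReal.ofReal]
  rw [← ENNReal.coe_rpow_of_nonneg u hp0, ← ENNReal.coe_rpow_of_nonneg v hp0,
    ← ENNReal.coe_rpow_of_nonneg u hp10, ← ENNReal.coe_rpow_of_nonneg v hp10,
    ← ENNReal.coe_sub, ← ENNReal.coe_sub, ← ENNReal.coe_mul, ← ENNReal.coe_mul,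
    ENNReal.coe_le_coe, ← NNReal.coe_le_coe]
  push_cast
  have hvv : v ≤ u := by exact_mod_cast hv
  have hv' : (v:ℝ) ≤ (u:ℝ) := hvv
  have hsub1 : ((u ^ p - v ^ p : ℝ≥0) : ℝ) = (u:ℝ)^p - (v:ℝ)^p := by
    rw [NNReal.coe_sub (by gcongr <;> exact_mod_cast hv)]
    push_cast; rfl
  have hsub2 : ((u ^ (p-1) - v ^ (p-1) : ℝ≥0) : ℝ) = (u:ℝ)^(p-1) - (v:ℝ)^(p-1) := by
    rw [NNReal.coe_sub (by gcongr <;> exact_mod_cast hv)]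
    push_cast; rfl
  rw [hsub1, hsub2, Real.coe_toNNReal _ (by positivity)]
  exact real_key hp v.coe_nonneg hv'

-- telescoping
lemma tele_aux {q : ℝ} (hq : 0 < q) :
    ∀ (c : ℕ) (V : Finset ℝ≥0∞) (v : ℝ≥0∞), (∀ u ∈ V, u ≠ ∞) → v ∈ V →
      (V.filter (· < v)).card ≤ c →
      ∑ u ∈ V.filter (· ≤ v), (u ^ q - ((V.filter (· < u)).sup id) ^ q) = v ^ q := by
  intro c
  induction c with
  | zero =>
    intro V v hV hv hc
    have hempty : V.filter (· < v) = ∅ := Finset.card_eq_zero.1 (Nat.le_zero.1 hc)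
    have : V.filter (· ≤ v) = {v} := by
      apply Finset.ext
      intro u
      simp only [Finset.mem_filter, Finset.mem_singleton]
      constructor
      · rintro ⟨hu, hle⟩
        rcases lt_or_eq_of_le hle with h | h
        · exfalso
          have hmem : u ∈ Finset.filter (· < v) V := Finset.mem_filter.2 ⟨hu, h⟩
          rw [hempty] at hmem
          exact Finset.notMem_empty u hmem
        · exact h
      · rintro rfl; exact ⟨hv, le_refl _⟩
    rw [this, Finset.sum_singleton, hempty]
    simp [ENNReal.zero_rpow_of_pos hq]
  | succ c ih =>
    intro V v hV hv hc
    by_cases hW : (V.filter (· < v)).Nonempty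
    · set W := V.filter (· < v) with hWdef
      set v' := W.max' hW with hv'
      have hv'W : v' ∈ W := W.max'_mem hW
      have hv'V : v' ∈ V := (Finset.mem_filter.1 hv'W).1
      have hv'lt : v' < v := (Finset.mem_filter.1 hv'W).2
      have hsup : W.sup id = v' := by
        rw [hv', Finset.max'_eq_sup' W hW]
        exact (Finset.sup'_eq_sup hW id).symm
      have hsplit : V.filter (· ≤ v) = insert v (V.filter (· ≤ v')) := by
        apply Finset.ext
        intro u
        simp only [Finset.mem_filter, Finset.mem_insert]
        constructor
        · rintro ⟨hu, hle⟩
          rcases lt_or_eq_of_le hle with h | h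
          · exact Or.inr ⟨hu, W.le_max' u (Finset.mem_filter.2 ⟨hu, h⟩)⟩
          · exact Or.inl h
        · rintro (rfl | ⟨hu, hle⟩)
          · exact ⟨hv, le_refl _⟩
          · exact ⟨hu, le_trans hle (le_of_lt hv'lt)⟩
      have hvnot : v ∉ V.filter (· ≤ v') := by
        simp only [Finset.mem_filter]
        rintro ⟨-, hle⟩
        exact absurd (lt_of_le_of_lt hle hv'lt) (lt_irrefl v)
      have hcard : (V.filter (· < v')).card ≤ c := by
        have hss : V.filter (· < v') ⊂ W := by
          rw [hWdef]
          constructor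
          · intro u hu
            simp only [Finset.mem_filter] at hu ⊢
            exact ⟨hu.1, lt_trans hu.2 hv'lt⟩
          · intro hcon
            have := hcon hv'W
            simp only [Finset.mem_filter] at this
            exact absurd this.2 (lt_irrefl v')
        have := Finset.card_lt_card hss
        omega
      rw [hsplit, Finset.sum_insert hvnot, ih V v' hV hv'V hcard, ← hWdef, hsup]
      have h1 : v' ^ q ≤ v ^ q := ENNReal.rpow_le_rpow (le_of_lt hv'lt) (le_of_lt hq)
      exact tsub_add_cancel_of_le h1
    · have hempty : V.filter (· < v) = ∅ := Finset.not_nonempty_iff_eq_empty.1 hW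
      have : V.filter (· ≤ v) = {v} := by
        apply Finset.ext
        intro u
        simp only [Finset.mem_filter, Finset.mem_singleton]
        constructor
        · rintro ⟨hu, hle⟩
          rcases lt_or_eq_of_le hle with h | h
          · exfalso
            have hmem : u ∈ Finset.filter (· < v) V := Finset.mem_filter.2 ⟨hu, h⟩
            rw [hempty] at hmem
            exact Finset.notMem_empty u hmem
          · exact h
        · rintro rfl; exact ⟨hv, le_refl _⟩
      rw [this, Finset.sum_singleton, hempty]
      simp [ENNReal.zero_rpow_of_pos hq]


open scoped Classical in
lemma carleson_embedding {X : Type*} [MeasurableSpace X] (μ : Measure X)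
    {p : ℝ} (hp : 1 < p) {f : X → ℝ≥0∞} (hf : Measurable f)
    (hfLp : ∫⁻ x, f x ^ p ∂μ ≠ ∞)
    {ι : Type*} (S : Finset ι) (Q : ι → Set X)
    (hQm : ∀ i ∈ S, MeasurableSet (Q i))
    (hQfin : ∀ i ∈ S, μ (Q i) ≠ ∞)
    (hnest : ∀ i ∈ S, ∀ j ∈ S, (Q i ∩ Q j).Nonempty → Q i ⊆ Q j ∨ Q j ⊆ Q i)
    (w : ι → ℝ≥0∞) (B' : ℝ≥0∞)
    (hCar : ∀ i ∈ S, ∑ j ∈ S.filter (fun j => Q j ⊆ Q i), w j ≤ B' * μ (Q i)) :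
    ∑ i ∈ S, w i * ((∫⁻ x in Q i, f x ∂μ) / μ (Q i)) ^ p ≤
      B' * ENNReal.ofReal (p/(p-1)) ^ p * ∫⁻ x, f x ^ p ∂μ := by
  have hp0 : (0:ℝ) < p := by linarith
  have hp1 : (0:ℝ) < p - 1 := by linarith
  set P' : ℝ≥0∞ := ENNReal.ofReal (p/(p-1)) with hP'
  set v : ι → ℝ≥0∞ := fun i => (∫⁻ x in Q i, f x ∂μ) / μ (Q i) with hvdef
  -- finiteness of integrals over cubes
  have hconj : p.HolderConjugate (p/(p-1)) := Real.HolderConjugate.conjExponent hp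
  have hIQfin : ∀ i ∈ S, (∫⁻ x in Q i, f x ∂μ) ≠ ∞ := by
    intro i hi
    have hH := lintegral_mul_le_Lp_mul_Lq (μ.restrict (Q i)) hconj hf.aemeasurable
      (aemeasurable_const (b := (1:ℝ≥0∞)))
    simp only [Pi.mul_apply, mul_one, ENNReal.one_rpow, lintegral_const,
      Measure.restrict_apply MeasurableSet.univ, Set.univ_inter, one_mul] at hH
    have h1 : (∫⁻ x in Q i, f x ^ p ∂μ) ≤ ∫⁻ x, f x ^ p ∂μ :=
      setLIntegral_le_lintegral _ _
    refine ne_top_of_le_ne_top (ENNReal.mul_ne_top ?_ ?_) hH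
    · exact ENNReal.rpow_ne_top_of_nonneg (by positivity) (ne_top_of_le_ne_top hfLp h1)
    · exact ENNReal.rpow_ne_top_of_nonneg (by positivity) (hQfin i hi)
  have hvfin : ∀ i ∈ S, v i ≠ ∞ := by
    intro i hi
    by_cases h0 : μ (Q i) = 0
    · have : (∫⁻ x in Q i, f x ∂μ) = 0 := setLIntegral_measure_zero _ _ h0
      simp [hvdef, this]
    · exact (ENNReal.div_lt_top (hIQfin i hi) h0).ne
  set V : Finset ℝ≥0∞ := (S.filter (fun i => v i ≠ 0)).image v with hVdef
  have hVfin : ∀ u ∈ V, u ≠ ∞ := by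
    intro u hu
    obtain ⟨i, hi, rfl⟩ := Finset.mem_image.1 hu
    exact hvfin i (Finset.mem_filter.1 hi).1
  have hV0 : ∀ u ∈ V, u ≠ 0 := by
    intro u hu
    obtain ⟨i, hi, rfl⟩ := Finset.mem_image.1 hu
    exact (Finset.mem_filter.1 hi).2
  set Su : ℝ≥0∞ → Finset ι := fun u => S.filter (fun i => u ≤ v i) with hSudef
  set E : ℝ≥0∞ → Set X := fun u => ⋃ i ∈ Su u, Q i with hEdef
  have hSuS : ∀ u, ∀ i ∈ Su u, i ∈ S := fun u i hi => (Finset.mem_filter.1 hi).1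
  have hEm : ∀ u, MeasurableSet (E u) :=
    fun u => (Su u).measurableSet_biUnion (fun i hi => hQm i (hSuS u i hi))
  have hEfin : ∀ u, μ (E u) ≠ ∞ := by
    intro u
    refine ne_top_of_le_ne_top ?_ (measure_biUnion_finset_le _ _)
    rw [← lt_top_iff_ne_top]
    exact ENNReal.sum_lt_top.2 (fun i hi => (hQfin i (hSuS u i hi)).lt_top)
  have hkey : ∀ u ∈ V, (∑ i ∈ Su u, w i ≤ B' * μ (E u)) ∧
      μ (E u) ≤ u⁻¹ * ∫⁻ x in E u, f x ∂μ := by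
    intro u huV
    have hu0 := hV0 u huV
    have hufin := hVfin u huV
    set C : Finset (Set X) := (Su u).image Q with hCdef
    set Cmax : Finset (Set X) := C.filter (fun c => ∀ c' ∈ C, ¬ c ⊂ c') with hCmaxdef
    have hCmem : ∀ c ∈ C, ∃ i ∈ Su u, Q i = c := by
      intro c hc
      obtain ⟨i, hi, h⟩ := Finset.mem_image.1 hc
      exact ⟨i, hi, h⟩
    have hmax : ∀ c ∈ C, ∃ c' ∈ Cmax, c ⊆ c' := by
      intro c hc
      obtain ⟨m, hm, hmm⟩ : ∃ m ∈ C.filter (fun c' => c ⊆ c'),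
          ∀ x ∈ C.filter (fun c' => c ⊆ c'), ¬ m < x := by
        obtain ⟨m, hmM⟩ := Finset.exists_maximal (s := C.filter (fun c' => c ⊆ c'))
          ⟨c, Finset.mem_filter.2 ⟨hc, subset_rfl⟩⟩
        exact ⟨m, hmM.prop, fun x hx hlt => hlt.not_ge (hmM.2 hx hlt.le)⟩
      obtain ⟨hmC, hcm⟩ := Finset.mem_filter.1 hm
      refine ⟨m, Finset.mem_filter.2 ⟨hmC, ?_⟩, hcm⟩
      intro c' hc' hlt
      exact hmm c' (Finset.mem_filter.2 ⟨hc', hcm.trans hlt.subset⟩) hlt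
    have hdisj : (↑Cmax : Set (Set X)).PairwiseDisjoint id := by
      intro c₁ h₁ c₂ h₂ hne
      have h₁' := Finset.mem_filter.1 (Finset.mem_coe.1 h₁)
      have h₂' := Finset.mem_filter.1 (Finset.mem_coe.1 h₂)
      obtain ⟨i₁, hi₁, hq₁⟩ := hCmem c₁ h₁'.1
      obtain ⟨i₂, hi₂, hq₂⟩ := hCmem c₂ h₂'.1
      simp only [id, Set.disjoint_iff_inter_eq_empty]
      by_contra hcon
      have hne' : (Q i₁ ∩ Q i₂).Nonempty := by
        rw [hq₁, hq₂]
        exact Set.nonempty_iff_ne_empty.2 hcon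
      rcases hnest i₁ (hSuS u i₁ hi₁) i₂ (hSuS u i₂ hi₂) hne' with h | h
      · exact h₁'.2 c₂ h₂'.1 (HasSubset.Subset.ssubset_of_ne (hq₁ ▸ hq₂ ▸ h) hne)
      · exact h₂'.2 c₁ h₁'.1 (HasSubset.Subset.ssubset_of_ne (hq₂ ▸ hq₁ ▸ h) hne.symm)
    have hCm : ∀ c ∈ Cmax, MeasurableSet c := by
      intro c hc
      obtain ⟨i, hi, hq⟩ := hCmem c (Finset.mem_filter.1 hc).1
      exact hq ▸ hQm i (hSuS u i hi)
    have hEeq : E u = ⋃ c ∈ Cmax, c := by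
      apply subset_antisymm
      · intro x hx
        rw [hEdef] at hx
        simp only [Set.mem_iUnion] at hx
        obtain ⟨i, hi, hxi⟩ := hx
        obtain ⟨c', hc', hsub⟩ := hmax (Q i) (Finset.mem_image.2 ⟨i, hi, rfl⟩)
        simp only [Set.mem_iUnion]
        exact ⟨c', hc', hsub hxi⟩
      · intro x hx
        simp only [Set.mem_iUnion] at hx
        obtain ⟨c, hc, hxc⟩ := hx
        obtain ⟨i, hi, hq⟩ := hCmem c (Finset.mem_filter.1 hc).1
        rw [hEdef]
        simp only [Set.mem_iUnion]
        exact ⟨i, hi, hq ▸ hxc⟩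
    have hmeasE : μ (E u) = ∑ c ∈ Cmax, μ c := by
      rw [hEeq]
      exact measure_biUnion_finset hdisj hCm
    have hintE : (∫⁻ x in E u, f x ∂μ) = ∑ c ∈ Cmax, ∫⁻ x in c, f x ∂μ := by
      rw [hEeq]
      exact lintegral_biUnion_finset hdisj hCm f
    constructor
    · -- claim 1
      have hch : ∀ i, ∃ c, i ∈ Su u → (c ∈ Cmax ∧ Q i ⊆ c) := by
        intro i
        by_cases hi : i ∈ Su u
        · obtain ⟨c', hc', hsub⟩ := hmax (Q i) (Finset.mem_image.2 ⟨i, hi, rfl⟩)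
          exact ⟨c', fun _ => ⟨hc', hsub⟩⟩
        · exact ⟨∅, fun h => absurd h hi⟩
      choose σ hσ using hch
      have hmaps : ∀ i ∈ Su u, σ i ∈ Cmax := fun i hi => (hσ i hi).1
      rw [← Finset.sum_fiberwise_of_maps_to hmaps w, hmeasE, Finset.mul_sum]
      apply Finset.sum_le_sum
      intro c hc
      obtain ⟨i₀, hi₀, hq₀⟩ := hCmem c (Finset.mem_filter.1 hc).1
      calc ∑ i ∈ (Su u).filter (fun i => σ i = c), w i
          ≤ ∑ j ∈ S.filter (fun j => Q j ⊆ Q i₀), w j := by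
            apply Finset.sum_le_sum_of_subset
            intro i hi
            obtain ⟨hi1, hi2⟩ := Finset.mem_filter.1 hi
            refine Finset.mem_filter.2 ⟨hSuS u i hi1, ?_⟩
            rw [hq₀]
            exact hi2 ▸ (hσ i hi1).2
        _ ≤ B' * μ (Q i₀) := hCar i₀ (hSuS u i₀ hi₀)
        _ = B' * μ c := by rw [hq₀]
    · -- claim 2
      rw [hmeasE, hintE, Finset.mul_sum]
      apply Finset.sum_le_sum
      intro c hc
      obtain ⟨i, hi, hq⟩ := hCmem c (Finset.mem_filter.1 hc).1
      subst hq
      by_cases hμ0 : μ (Q i) = 0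
      · rw [hμ0]
        exact zero_le
      · have hui : u ≤ v i := (Finset.mem_filter.1 hi).2
        have hmul : u * μ (Q i) ≤ ∫⁻ x in Q i, f x ∂μ := by
          rw [hvdef] at hui
          exact (ENNReal.le_div_iff_mul_le (Or.inl hμ0) (Or.inl (hQfin i (hSuS u i hi)))).1 hui
        calc μ (Q i) = u⁻¹ * (u * μ (Q i)) := by
              rw [← mul_assoc, ENNReal.inv_mul_cancel hu0 hufin, one_mul]
          _ ≤ u⁻¹ * ∫⁻ x in Q i, f x ∂μ := by gcongr
  -- level decomposition
  set prev : ℝ≥0∞ → ℝ≥0∞ := fun u => (V.filter (· < u)).sup id with hprevdef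
  set cc : ℝ≥0∞ → ℝ≥0∞ := fun u => u ^ p - (prev u) ^ p with hccdef
  set dd : ℝ≥0∞ → ℝ≥0∞ := fun u => u ^ (p-1) - (prev u) ^ (p-1) with hdddef
  have hprevle : ∀ u, prev u ≤ u :=
    fun u => Finset.sup_le (fun b hb => le_of_lt (Finset.mem_filter.1 hb).2)
  have htele : ∀ u₀ ∈ V, ∑ u ∈ V.filter (· ≤ u₀), cc u = u₀ ^ p :=
    fun u₀ h => tele_aux hp0 _ V u₀ hVfin h le_rfl
  have htele' : ∀ u₀ ∈ V, ∑ u ∈ V.filter (· ≤ u₀), dd u = u₀ ^ (p-1) :=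
    fun u₀ h => tele_aux hp1 _ V u₀ hVfin h le_rfl
  have hccfin : ∀ u ∈ V, cc u ≠ ∞ := fun u hu =>
    ne_top_of_le_ne_top (ENNReal.rpow_ne_top_of_nonneg hp0.le (hVfin u hu)) tsub_le_self
  have hcd : ∀ u ∈ V, cc u * u⁻¹ ≤ P' * dd u := by
    intro u hu
    have h1 : cc u ≤ P' * (u * dd u) := ennreal_key hp (hprevle u) (hVfin u hu)
    calc cc u * u⁻¹ ≤ P' * (u * dd u) * u⁻¹ := by gcongr
      _ = P' * dd u := by
          rw [mul_comm u (dd u), ← mul_assoc, mul_assoc (P' * dd u),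
            ENNReal.mul_inv_cancel (hV0 u hu) (hVfin u hu), mul_one]
  set I : ℝ≥0∞ := ∑ u ∈ V, cc u * μ (E u) with hIdef
  have hIfin : I ≠ ∞ := by
    rw [← lt_top_iff_ne_top]
    exact ENNReal.sum_lt_top.2 (fun u hu =>
      ENNReal.mul_lt_top (hccfin u hu).lt_top (hEfin u).lt_top)
  -- the three pointwise functions
  set hfun : X → ℝ≥0∞ := fun x => ∑ u ∈ V, (E u).indicator (fun _ => dd u) x with hhfundef
  set gfun : X → ℝ≥0∞ := fun x => ∑ u ∈ V, (E u).indicator (fun _ => cc u) x with hgfundef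
  set phifun : X → ℝ≥0∞ :=
    fun x => ∑ u ∈ V, (E u).indicator (fun _ => cc u * u⁻¹) x with hphifundef
  have hhm : Measurable hfun :=
    Finset.measurable_sum _ (fun u hu => measurable_const.indicator (hEm u))
  have hgm : Measurable gfun :=
    Finset.measurable_sum _ (fun u hu => measurable_const.indicator (hEm u))
  have hEanti : ∀ u₁ u₂ : ℝ≥0∞, u₁ ≤ u₂ → E u₂ ⊆ E u₁ := by
    intro u₁ u₂ h x hx
    rw [hEdef] at hx ⊢
    simp only [Set.mem_iUnion] at hx ⊢
    obtain ⟨i, hi, hxi⟩ := hx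
    obtain ⟨hiS, hui⟩ := Finset.mem_filter.1 hi
    exact ⟨i, Finset.mem_filter.2 ⟨hiS, le_trans h hui⟩, hxi⟩
  have hpoint : ∀ x, hfun x ^ (p/(p-1)) = gfun x := by
    intro x
    have hexp : (0:ℝ) < p/(p-1) := by positivity
    have h1 : hfun x = ∑ u ∈ V.filter (fun u => x ∈ E u), dd u := by
      rw [Finset.sum_filter]
      exact Finset.sum_congr rfl (fun u hu => by rw [Set.indicator_apply])
    have h2 : gfun x = ∑ u ∈ V.filter (fun u => x ∈ E u), cc u := by
      rw [Finset.sum_filter]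
      exact Finset.sum_congr rfl (fun u hu => by rw [Set.indicator_apply])
    by_cases hne : (V.filter (fun u => x ∈ E u)).Nonempty
    · set M := (V.filter (fun u => x ∈ E u)).max' hne with hM
      have hMmem := (V.filter (fun u => x ∈ E u)).max'_mem hne
      have hMV : M ∈ V := (Finset.mem_filter.1 hMmem).1
      have hMx : x ∈ E M := (Finset.mem_filter.1 hMmem).2
      have hdc : V.filter (fun u => x ∈ E u) = V.filter (· ≤ M) := by
        apply Finset.ext
        intro u
        simp only [Finset.mem_filter]
        constructor
        · rintro ⟨huV, hxu⟩
          exact ⟨huV, Finset.le_max' _ u (Finset.mem_filter.2 ⟨huV, hxu⟩)⟩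
        · rintro ⟨huV, hle⟩
          exact ⟨huV, hEanti u M hle hMx⟩
      rw [h1, h2, hdc, htele' M hMV, htele M hMV, ← ENNReal.rpow_mul]
      congr 1
      field_simp
    · rw [Finset.not_nonempty_iff_eq_empty.1 hne] at h1 h2
      rw [h1, h2]
      simp [ENNReal.zero_rpow_of_pos hexp]
  have hIg : ∫⁻ x, gfun x ∂μ = I := by
    rw [hgfundef, lintegral_finset_sum _ (fun u hu => measurable_const.indicator (hEm u))]
    apply Finset.sum_congr rfl
    intro u hu
    rw [lintegral_indicator (hEm u), setLIntegral_const]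
  -- Step A : I ≤ ∫ f * phifun
  have hstepA : I ≤ ∫⁻ x, f x * phifun x ∂μ := by
    have hA1 : I ≤ ∑ u ∈ V, (cc u * u⁻¹) * ∫⁻ x, (E u).indicator f x ∂μ := by
      rw [hIdef]
      apply Finset.sum_le_sum
      intro u hu
      rw [lintegral_indicator (hEm u), mul_assoc]
      exact mul_le_mul_right (hkey u hu).2 (cc u)
    refine le_trans hA1 (le_of_eq ?_)
    have hmove : ∀ u ∈ V, (cc u * u⁻¹) * ∫⁻ x, (E u).indicator f x ∂μ
        = ∫⁻ x, (cc u * u⁻¹) * (E u).indicator f x ∂μ := fun u hu =>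
      (lintegral_const_mul _ (hf.indicator (hEm u))).symm
    rw [Finset.sum_congr rfl hmove,
      ← lintegral_finset_sum _ (fun u _ => (hf.indicator (hEm u)).const_mul _)]
    apply lintegral_congr
    intro x
    rw [hphifundef, Finset.mul_sum]
    apply Finset.sum_congr rfl
    intro u hu
    by_cases hx : x ∈ E u
    · rw [Set.indicator_of_mem hx, Set.indicator_of_mem hx]
      ring
    · rw [Set.indicator_of_notMem hx, Set.indicator_of_notMem hx]
      simp
  -- Step B : phifun ≤ P' * hfun pointwise
  have hstepB : ∀ x, phifun x ≤ P' * hfun x := by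
    intro x
    rw [hphifundef, hhfundef, Finset.mul_sum]
    apply Finset.sum_le_sum
    intro u hu
    by_cases hx : x ∈ E u
    · rw [Set.indicator_of_mem hx, Set.indicator_of_mem hx]
      exact hcd u hu
    · rw [Set.indicator_of_notMem hx, Set.indicator_of_notMem hx]
      simp
  -- Hölder
  set N : ℝ≥0∞ := (∫⁻ x, f x ^ p ∂μ) ^ (1/p) with hN
  have hholder : (∫⁻ x, f x * hfun x ∂μ) ≤ N * I ^ (1/(p/(p-1))) := by
    have := lintegral_mul_le_Lp_mul_Lq μ hconj hf.aemeasurable hhm.aemeasurable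
    simp only [Pi.mul_apply] at this
    refine le_trans this (le_of_eq ?_)
    congr 1
    congr 1
    rw [← hIg]
    apply lintegral_congr
    intro x
    exact hpoint x
  have hIbound : I ≤ P' ^ p * ∫⁻ x, f x ^ p ∂μ := by
    by_cases hI0 : I = 0
    · rw [hI0]; exact zero_le
    · have hchain : I ≤ (P' * N) * I ^ (1/(p/(p-1))) := by
        calc I ≤ ∫⁻ x, f x * phifun x ∂μ := hstepA
          _ ≤ ∫⁻ x, P' * (f x * hfun x) ∂μ := by
              apply lintegral_mono
              intro x
              calc f x * phifun x ≤ f x * (P' * hfun x) := mul_le_mul_right (hstepB x) _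
                _ = P' * (f x * hfun x) := by ring
          _ = P' * ∫⁻ x, f x * hfun x ∂μ :=
              lintegral_const_mul P' (hf.mul hhm)
          _ ≤ P' * (N * I ^ (1/(p/(p-1)))) := mul_le_mul_right hholder P'
          _ = (P' * N) * I ^ (1/(p/(p-1))) := by rw [mul_assoc]
      have hqne : I ^ (1/(p/(p-1))) ≠ 0 := by
        simp only [ne_eq, ENNReal.rpow_eq_zero_iff, not_or]
        constructor
        · rintro ⟨h, -⟩; exact hI0 h
        · rintro ⟨h, -⟩; exact hIfin h
      have hqfin : I ^ (1/(p/(p-1))) ≠ ∞ := by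
        refine ENNReal.rpow_ne_top_of_nonneg (by positivity) hIfin
      have hsum' : 1/p + 1/(p/(p-1)) = 1 := by
        rw [one_div, one_div]
        exact hconj.inv_add_inv_eq_one
      have hsplit : I ^ (1/p) * I ^ (1/(p/(p-1))) = I := by
        rw [← ENNReal.rpow_add _ _ hI0 hIfin, hsum', ENNReal.rpow_one]
      have hJ : I ^ (1/p) ≤ P' * N := by
        apply (ENNReal.mul_le_mul_iff_left hqne hqfin).1
        rw [hsplit]
        exact hchain
      calc I = (I ^ (1/p)) ^ p := by
            rw [← ENNReal.rpow_mul, one_div, inv_mul_cancel₀ (ne_of_gt hp0), ENNReal.rpow_one]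
        _ ≤ (P' * N) ^ p := by gcongr
        _ = P' ^ p * N ^ p := ENNReal.mul_rpow_of_nonneg _ _ hp0.le
        _ = P' ^ p * ∫⁻ x, f x ^ p ∂μ := by
            rw [hN, ← ENNReal.rpow_mul, one_div, inv_mul_cancel₀ (ne_of_gt hp0),
              ENNReal.rpow_one]
  -- the main sum bound
  have hmain : ∑ i ∈ S, w i * v i ^ p ≤ B' * I := by
    have hfilter : ∑ i ∈ S.filter (fun i => v i ≠ 0), w i * v i ^ p
        = ∑ i ∈ S, w i * v i ^ p := by
      apply Finset.sum_filter_of_ne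
      intro i hi hne
      intro h0
      apply hne
      rw [h0, ENNReal.zero_rpow_of_pos hp0, mul_zero]
    rw [← hfilter]
    have hvV : ∀ i ∈ S.filter (fun i => v i ≠ 0), v i ∈ V := by
      intro i hi
      exact Finset.mem_image.2 ⟨i, hi, rfl⟩
    calc ∑ i ∈ S.filter (fun i => v i ≠ 0), w i * v i ^ p
        = ∑ i ∈ S.filter (fun i => v i ≠ 0), ∑ u ∈ V, if u ≤ v i then w i * cc u else 0 := by
          apply Finset.sum_congr rfl
          intro i hi
          rw [← htele (v i) (hvV i hi), Finset.mul_sum, Finset.sum_filter]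
      _ = ∑ u ∈ V, ∑ i ∈ S.filter (fun i => v i ≠ 0), if u ≤ v i then w i * cc u else 0 :=
          Finset.sum_comm
      _ = ∑ u ∈ V, ∑ i ∈ (S.filter (fun i => v i ≠ 0)).filter (fun i => u ≤ v i), w i * cc u := by
          apply Finset.sum_congr rfl
          intro u hu
          exact (Finset.sum_filter (fun i => u ≤ v i) (fun i => w i * cc u)).symm
      _ ≤ ∑ u ∈ V, ∑ i ∈ Su u, w i * cc u := by
          apply Finset.sum_le_sum
          intro u hu
          apply Finset.sum_le_sum_of_subset
          intro i hi
          obtain ⟨hi1, hi2⟩ := Finset.mem_filter.1 hi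
          exact Finset.mem_filter.2 ⟨(Finset.mem_filter.1 hi1).1, hi2⟩
      _ = ∑ u ∈ V, (∑ i ∈ Su u, w i) * cc u := by
          apply Finset.sum_congr rfl
          intro u hu
          rw [Finset.sum_mul]
      _ ≤ ∑ u ∈ V, (B' * μ (E u)) * cc u := by
          apply Finset.sum_le_sum
          intro u hu
          exact mul_le_mul_left (hkey u hu).1 (cc u)
      _ = B' * I := by
          rw [hIdef, Finset.mul_sum]
          apply Finset.sum_congr rfl
          intro u hu
          ring
  calc ∑ i ∈ S, w i * ((∫⁻ x in Q i, f x ∂μ) / μ (Q i)) ^ p ≤ B' * I := hmain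
    _ ≤ B' * (P' ^ p * ∫⁻ x, f x ^ p ∂μ) := mul_le_mul_right hIbound B'
    _ = B' * P' ^ p * ∫⁻ x, f x ^ p ∂μ := by rw [mul_assoc]


lemma maxOpP_coe_pow {n : ℕ} (μ : Measure (Fin n → ℝ)) (s : Finset (ℤ × (Fin n → ℤ)))
    (a : ℤ × (Fin n → ℤ) → (Fin n → ℝ) → ℝ≥0∞) {p : ℝ} (hp0 : 0 < p)
    (f : (Fin n → ℝ) → ℝ≥0∞) (x : Fin n → ℝ) :
    (maxOpP μ (↑s) a p f x) ^ p =
      ∑ i ∈ s, ((dyadicCube n i.1 i.2).indicator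
        (fun y => (∫⁻ z in dyadicCube n i.1 i.2, f z ∂μ) * a i y) x) ^ p := by
  rw [maxOpP, ← ENNReal.rpow_mul, one_div, inv_mul_cancel₀ (ne_of_gt hp0), ENNReal.rpow_one]
  exact Finset.tsum_subtype s (fun i => ((dyadicCube n i.1 i.2).indicator
    (fun y => (∫⁻ z in dyadicCube n i.1 i.2, f z ∂μ) * a i y) x) ^ p)

lemma sum_integral_eq {n : ℕ} (ν : Measure (Fin n → ℝ)) (s : Finset (ℤ × (Fin n → ℤ)))
    (a : ℤ × (Fin n → ℤ) → (Fin n → ℝ) → ℝ≥0∞) (ha : ∀ i, Measurable (a i))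
    {p : ℝ} (hp0 : 0 < p) (c : ℤ × (Fin n → ℤ) → ℝ≥0∞) :
    ∫⁻ x, ∑ i ∈ s, ((dyadicCube n i.1 i.2).indicator (fun y => c i * a i y) x) ^ p ∂ν
      = ∑ i ∈ s, (c i) ^ p * ∫⁻ x in dyadicCube n i.1 i.2, (a i x) ^ p ∂ν := by
  have hmeas : ∀ i : ℤ × (Fin n → ℤ),
      Measurable (fun x => ((dyadicCube n i.1 i.2).indicator (fun y => c i * a i y) x) ^ p) :=
    fun i => (((ha i).const_mul (c i)).indicator (dyadicCube_measurable n i.1 i.2)).pow_const p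
  rw [lintegral_finset_sum _ (fun i _ => hmeas i)]
  apply Finset.sum_congr rfl
  intro i _
  have hpt : ∀ x, ((dyadicCube n i.1 i.2).indicator (fun y => c i * a i y) x) ^ p
      = (dyadicCube n i.1 i.2).indicator (fun y => (c i) ^ p * (a i y) ^ p) x := by
    intro x
    by_cases hx : x ∈ dyadicCube n i.1 i.2
    · rw [Set.indicator_of_mem hx, Set.indicator_of_mem hx,
        ENNReal.mul_rpow_of_nonneg _ _ hp0.le]
    · rw [Set.indicator_of_notMem hx, Set.indicator_of_notMem hx,
        ENNReal.zero_rpow_of_pos hp0]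
  rw [lintegral_congr hpt, lintegral_indicator (dyadicCube_measurable n i.1 i.2),
    lintegral_const_mul _ ((ha i).pow_const p)]

open scoped Classical in
/-- Sufficiency in the main theorem for `q = p` and a finite lattice: the Sawyer-type
testing condition on all truncations implies the full two weight bound, with constant
`C(p) = ((1+1/p)^(p+1) p)^(1/p) p'`. -/
theorem sufficiency_finite_lattice {n : ℕ}
    (μ ν : Measure (Fin n → ℝ))
    (D : Finset (ℤ × (Fin n → ℤ)))
    (hμ : ∀ i ∈ D, μ (dyadicCube n i.1 i.2) < ∞)
    (hν : ∀ i ∈ D, ν (dyadicCube n i.1 i.2) < ∞)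
    (p : ℝ) (hp : 1 < p)
    (a : ℤ × (Fin n → ℤ) → (Fin n → ℝ) → ℝ≥0∞) (ha : ∀ i, Measurable (a i))
    (B : ℝ≥0∞)
    (hTest : ∀ i ∈ D,
      (∫⁻ x, (maxOpP μ {j | j ∈ D ∧ dyadicCube n j.1 j.2 ⊆ dyadicCube n i.1 i.2} a p
          ((dyadicCube n i.1 i.2).indicator 1) x) ^ p ∂ν) ^ (1 / p) ≤
        B * μ (dyadicCube n i.1 i.2) ^ (1 / p))
    (f : (Fin n → ℝ) → ℝ≥0∞) (hf : Measurable f)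
    (hfLp : ∫⁻ x, f x ^ p ∂μ ≠ ∞) :
    (∫⁻ x, (maxOpP μ {j | j ∈ D} a p f x) ^ p ∂ν) ^ (1 / p) ≤
      ENNReal.ofReal (((1 + 1 / p) ^ (p + 1) * p) ^ (1 / p) * (p / (p - 1))) * B *
        (∫⁻ x, f x ^ p ∂μ) ^ (1 / p) := by
  have hp0 : (0:ℝ) < p := by linarith
  have hp1 : (0:ℝ) < p - 1 := by linarith
  set Q : ℤ × (Fin n → ℤ) → Set (Fin n → ℝ) := fun i => dyadicCube n i.1 i.2 with hQdef
  have hQm : ∀ i, MeasurableSet (Q i) := fun i => dyadicCube_measurable n i.1 i.2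
  set A : ℤ × (Fin n → ℤ) → ℝ≥0∞ := fun i => ∫⁻ x in Q i, (a i x) ^ p ∂ν with hAdef
  -- rewrite the left-hand side integral
  rw [show {j | j ∈ D} = (↑D : Set (ℤ × (Fin n → ℤ))) from Finset.setOf_mem]
  have hLHS : (∫⁻ x, (maxOpP μ (↑D) a p f x) ^ p ∂ν)
      = ∑ i ∈ D, (∫⁻ z in Q i, f z ∂μ) ^ p * A i := by
    rw [← sum_integral_eq ν D a ha hp0 (fun i => ∫⁻ z in Q i, f z ∂μ)]
    exact lintegral_congr (fun x => maxOpP_coe_pow μ D a hp0 f x)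
  -- trivial case: f vanishes
  by_cases hf0 : (∫⁻ x, f x ^ p ∂μ) = 0
  · have hae : f =ᵐ[μ] 0 := by
      have h1 : (fun x => f x ^ p) =ᵐ[μ] 0 :=
        (lintegral_eq_zero_iff (hf.pow_const p)).1 hf0
      filter_upwards [h1] with x hx
      rcases (ENNReal.rpow_eq_zero_iff).1 hx with ⟨h, -⟩ | ⟨-, hneg⟩
      · exact h
      · linarith
    have hzero : ∀ i : ℤ × (Fin n → ℤ), (∫⁻ z in Q i, f z ∂μ) = 0 := by
      intro i
      have : (∫⁻ z in Q i, f z ∂μ) = ∫⁻ z in Q i, 0 ∂μ :=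
        lintegral_congr_ae (ae_restrict_of_ae hae)
      simpa using this
    rw [hLHS]
    have : ∑ i ∈ D, (∫⁻ z in Q i, f z ∂μ) ^ p * A i = 0 := by
      apply Finset.sum_eq_zero
      intro i _
      rw [hzero i, ENNReal.zero_rpow_of_pos hp0, zero_mul]
    rw [this, ENNReal.zero_rpow_of_pos (by positivity)]
    exact zero_le
  have hCpos : (0:ℝ) < ((1 + 1 / p) ^ (p + 1) * p) ^ (1 / p) * (p / (p - 1)) := by
    apply _root_.mul_pos
    · apply Real.rpow_pos_of_pos
      exact _root_.mul_pos (Real.rpow_pos_of_pos (by positivity) _) hp0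
    · exact div_pos hp0 hp1
  -- trivial case: B = ∞
  by_cases hB : B = ∞
  · have hN0 : (∫⁻ x, f x ^ p ∂μ) ^ (1/p) ≠ 0 := by
      simp only [ne_eq, ENNReal.rpow_eq_zero_iff, not_or]
      constructor
      · rintro ⟨h, -⟩; exact hf0 h
      · rintro ⟨h, -⟩; exact hfLp h
    have : ENNReal.ofReal (((1 + 1 / p) ^ (p + 1) * p) ^ (1 / p) * (p / (p - 1))) * B *
        (∫⁻ x, f x ^ p ∂μ) ^ (1 / p) = ∞ := by
      rw [hB, ENNReal.mul_top (by rw [Ne, ENNReal.ofReal_eq_zero, not_le]; exact hCpos),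
        ENNReal.top_mul hN0]
    rw [this]
    exact le_top
  -- main case: apply the Carleson embedding
  have hBp : B ^ p ≠ ∞ := ENNReal.rpow_ne_top_of_nonneg hp0.le hB
  -- testing condition in discrete form
  have hTest' : ∀ i ∈ D, ∑ j ∈ D.filter (fun j => Q j ⊆ Q i), μ (Q j) ^ p * A j
      ≤ B ^ p * μ (Q i) := by
    intro i hi
    have h := ENNReal.rpow_le_rpow (hTest i hi) hp0.le
    have hJ : {j | j ∈ D ∧ dyadicCube n j.1 j.2 ⊆ dyadicCube n i.1 i.2}
        = (↑(D.filter (fun j => Q j ⊆ Q i)) : Set (ℤ × (Fin n → ℤ))) := by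
      rw [Finset.coe_filter]
    rw [hJ, ← ENNReal.rpow_mul, one_div, inv_mul_cancel₀ (ne_of_gt hp0), ENNReal.rpow_one,
      ENNReal.mul_rpow_of_nonneg _ _ hp0.le, ← ENNReal.rpow_mul,
      inv_mul_cancel₀ (ne_of_gt hp0), ENNReal.rpow_one] at h
    calc ∑ j ∈ D.filter (fun j => Q j ⊆ Q i), μ (Q j) ^ p * A j
        = ∫⁻ x, (maxOpP μ (↑(D.filter (fun j => Q j ⊆ Q i))) a p
            ((dyadicCube n i.1 i.2).indicator 1) x) ^ p ∂ν := by
          rw [show (∫⁻ x, (maxOpP μ (↑(D.filter (fun j => Q j ⊆ Q i))) a p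
              ((dyadicCube n i.1 i.2).indicator 1) x) ^ p ∂ν)
            = ∑ j ∈ D.filter (fun j => Q j ⊆ Q i),
              (∫⁻ z in Q j, (dyadicCube n i.1 i.2).indicator 1 z ∂μ) ^ p * A j from by
            rw [← sum_integral_eq ν _ a ha hp0]
            exact lintegral_congr (fun x => maxOpP_coe_pow μ _ a hp0 _ x)]
          apply Finset.sum_congr rfl
          intro j hj
          obtain ⟨hjD, hsub⟩ := Finset.mem_filter.1 hj
          congr 2
          rw [lintegral_indicator (hQm i)]
          simp only [Pi.one_apply]
          rw [setLIntegral_one, Measure.restrict_apply (hQm i),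
            Set.inter_eq_right.mpr hsub]
      _ ≤ B ^ p * μ (Q i) := h
  have hcore := carleson_embedding μ hp hf hfLp D Q (fun i _ => hQm i)
    (fun i hi => (hμ i hi).ne)
    (fun i _ j _ hne => dyadicCube_nested_or n i j hne)
    (fun i => μ (Q i) ^ p * A i) (B ^ p) hTest'
  have hEq : ∑ i ∈ D, (∫⁻ z in Q i, f z ∂μ) ^ p * A i
      = ∑ i ∈ D, (μ (Q i) ^ p * A i) * ((∫⁻ x in Q i, f x ∂μ) / μ (Q i)) ^ p := by
    apply Finset.sum_congr rfl
    intro i hi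
    by_cases h0 : μ (Q i) = 0
    · have h1 : (∫⁻ z in Q i, f z ∂μ) = 0 := setLIntegral_measure_zero _ _ h0
      rw [h1, h0]
      simp [ENNReal.zero_rpow_of_pos hp0]
    · have hfin : μ (Q i) ≠ ∞ := (hμ i hi).ne
      have hpne : μ (Q i) ^ p ≠ 0 := by
        simp only [ne_eq, ENNReal.rpow_eq_zero_iff, not_or]
        constructor
        · rintro ⟨h, -⟩; exact h0 h
        · rintro ⟨h, -⟩; exact hfin h
      have hpfin : μ (Q i) ^ p ≠ ∞ := ENNReal.rpow_ne_top_of_nonneg hp0.le hfin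
      rw [ENNReal.div_rpow_of_nonneg _ _ hp0.le]
      rw [mul_comm (μ (Q i) ^ p) (A i), mul_assoc,
        ENNReal.mul_div_cancel hpne hpfin]
      ring
  rw [hLHS, hEq]
  refine le_trans (ENNReal.rpow_le_rpow hcore (by positivity)) ?_
  have hsplit : (B ^ p * ENNReal.ofReal (p/(p-1)) ^ p * ∫⁻ x, f x ^ p ∂μ) ^ (1/p)
      = B * ENNReal.ofReal (p/(p-1)) * (∫⁻ x, f x ^ p ∂μ) ^ (1/p) := by
    rw [ENNReal.mul_rpow_of_nonneg _ _ (by positivity),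
      ENNReal.mul_rpow_of_nonneg _ _ (by positivity),
      ← ENNReal.rpow_mul B, ← ENNReal.rpow_mul (ENNReal.ofReal (p/(p-1))),
      mul_one_div_cancel (ne_of_gt hp0), ENNReal.rpow_one, ENNReal.rpow_one]
  rw [hsplit]
  have hPC : ENNReal.ofReal (p/(p-1)) ≤
      ENNReal.ofReal (((1 + 1 / p) ^ (p + 1) * p) ^ (1 / p) * (p / (p - 1))) := by
    apply ENNReal.ofReal_le_ofReal
    have hmem : (0:ℝ) < 1/p := by positivity
    have hK : (1:ℝ) ≤ ((1 + 1 / p) ^ (p + 1) * p) ^ (1 / p) := by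
      apply Real.one_le_rpow ?_ (by positivity)
      calc (1:ℝ) = 1 * 1 := (one_mul 1).symm
        _ ≤ (1 + 1 / p) ^ (p + 1) * p := by
          apply mul_le_mul ?_ (by linarith) (by norm_num) (by positivity)
          exact Real.one_le_rpow (by linarith) (by linarith)
    exact le_mul_of_one_le_left (by positivity) hK
  calc B * ENNReal.ofReal (p/(p-1)) * (∫⁻ x, f x ^ p ∂μ) ^ (1/p)
      = ENNReal.ofReal (p/(p-1)) * B * (∫⁻ x, f x ^ p ∂μ) ^ (1/p) := by ring
    _ ≤ ENNReal.ofReal (((1 + 1 / p) ^ (p + 1) * p) ^ (1 / p) * (p / (p - 1))) * B *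
        (∫⁻ x, f x ^ p ∂μ) ^ (1 / p) := by gcongr
end
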